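/- arXiv:1403.2627 — 8 statements merged into one kernel-verified Lean document; each statement's English description precedes it below -/
import Mathlib

section
/- Let m ∈ ℕ, 0 ≤ α ≤ 1, M ≥ 1, and v ∈ h^{-mα}_0. Then for every λ ∈ Ext_M one has the Hilbert–Schmidt bound (Σ_{k∈ℤ} Σ_{j∈ℤ} |v(k−j)|² / (|λ − k^{2m}π^{2m}|·|λ − j^{2m}π^{2m}|))^{1/2} ≤ 2^{2m+1} ‖v‖_{h^{-mα}} · M^{−((1−α)/2 + 1/4)}; in particular the operator S_{mλ} on ℓ²(ℤ,ℂ) satisfies ‖S_{mλ}‖ ≤ 2^{2m+1} ‖v‖_{h^{-mα}} M^{−((1−α)/2+1/4)}. -/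
open scoped BigOperators
open Filter
open scoped ENNReal
set_option maxHeartbeats 1000000
noncomputable section

/-- The weight `⟨k⟩ = 1 + |k|`. -/
def wt (k : ℤ) : ℝ := 1 + |(k : ℝ)|

/-- `a ∈ h^s`: square-summability of `a` with weight `⟨k⟩^{2s}`. -/
def MemHs (s : ℝ) (a : ℤ → ℂ) : Prop :=
  Summable fun k : ℤ => wt k ^ (2 * s) * ‖a k‖ ^ 2

/-- The `h^s` norm. -/
def hsNorm (s : ℝ) (a : ℤ → ℂ) : ℝ :=
  Real.sqrt (∑' k : ℤ, wt k ^ (2 * s) * ‖a k‖ ^ 2)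

/-- `λ` is a periodic eigenvalue of `v`. -/
def IsPeriodicEigenvalue (m : ℕ) (α : ℝ) (v : ℤ → ℂ) (lam : ℂ) : Prop :=
  ∃ a : ℤ → ℂ, a ≠ 0 ∧ MemHs ((m : ℝ) * (2 - α)) a ∧
    ∀ k : ℤ, (k : ℂ) ^ (2 * m) * (Real.pi : ℂ) ^ (2 * m) * a k
      + ∑' j : ℤ, v (k - j) * a j = lam * a k

/-- `|λ - k^{2m} π^{2m}|`. -/
def diagAbs (m : ℕ) (lam : ℂ) (k : ℤ) : ℝ :=
  ‖lam - (k : ℂ) ^ (2 * m) * (Real.pi : ℂ) ^ (2 * m)‖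

/-- The matrix `S_{mλ}(k,j)`. -/
def Smat (m : ℕ) (v : ℤ → ℂ) (lam : ℂ) (k j : ℤ) : ℂ :=
  v (k - j) / ((Real.sqrt (diagAbs m lam k) * Real.sqrt (diagAbs m lam j) : ℝ) : ℂ)

/-- The matrix `S` defines a bounded operator on `ℓ²(ℤ, ℂ)` of norm at most `c`. -/
def MatOpNormLE (S : ℤ → ℤ → ℂ) (c : ℝ) : Prop :=
  ∃ T : lp (fun _ : ℤ => ℂ) 2 →L[ℂ] lp (fun _ : ℤ => ℂ) 2,
    ‖T‖ ≤ c ∧ ∀ a : lp (fun _ : ℤ => ℂ) 2, ∀ k : ℤ, T a k = ∑' j : ℤ, S k j * a j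

/-- The matrix `S` defines a bounded operator on `ℓ²(ℤ, ℂ)` of norm less than `c`. -/
def MatOpNormLT (S : ℤ → ℤ → ℂ) (c : ℝ) : Prop :=
  ∃ T : lp (fun _ : ℤ => ℂ) 2 →L[ℂ] lp (fun _ : ℤ => ℂ) 2,
    ‖T‖ < c ∧ ∀ a : lp (fun _ : ℤ => ℂ) 2, ∀ k : ℤ, T a k = ∑' j : ℤ, S k j * a j

/-- `Ext_M = {λ : Re λ ≤ |Im λ| - M}`. -/
def ExtSet (M : ℝ) : Set ℂ := {lam : ℂ | lam.re ≤ |lam.im| - M}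

/-- `Vert^m_n(r)`. -/
def VertSet (m n : ℕ) (r : ℝ) : Set ℂ :=
  {lam : ℂ | |(lam - (n : ℂ) ^ (2 * m) * (Real.pi : ℂ) ^ (2 * m)).re| ≤ (n : ℝ) ^ m * Real.pi ^ (2 * m)
    ∧ r ≤ ‖lam - (n : ℂ) ^ (2 * m) * (Real.pi : ℂ) ^ (2 * m)‖}

/-- Cauchy–Schwarz for tsums of nonneg reals. -/
lemma cs_tsum {ι : Type*} (f g : ι → ℝ) (hf0 : ∀ i, 0 ≤ f i) (hg0 : ∀ i, 0 ≤ g i)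
    (hf : Summable fun i => f i ^ 2) (hg : Summable fun i => g i ^ 2) :
    Summable (fun i => f i * g i) ∧
      ∑' i, f i * g i ≤ Real.sqrt (∑' i, f i ^ 2) * Real.sqrt (∑' i, g i ^ 2) := by
  have key : ∀ s : Finset ι,
      ∑ i ∈ s, f i * g i ≤ Real.sqrt (∑' i, f i ^ 2) * Real.sqrt (∑' i, g i ^ 2) := by
    intro s
    refine (Real.sum_mul_le_sqrt_mul_sqrt s f g).trans ?_
    gcongr
    · exact Summable.sum_le_tsum s (fun i _ => sq_nonneg _) hf
    · exact Summable.sum_le_tsum s (fun i _ => sq_nonneg _) hg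
  have hs : Summable fun i => f i * g i :=
    summable_of_sum_le (fun i => mul_nonneg (hf0 i) (hg0 i)) key
  exact ⟨hs, Summable.tsum_le_of_sum_le hs key⟩

/-- if `e ≤ a` or `e ≤ b` then `(a b)⁻¹ ≤ e⁻¹ (a⁻¹ + b⁻¹)`. -/
lemma prod_inv_le {a b e : ℝ} (ha : 0 < a) (hb : 0 < b) (he : 0 < e) (h : e ≤ a ∨ e ≤ b) :
    (a * b)⁻¹ ≤ e⁻¹ * (a⁻¹ + b⁻¹) := by
  rcases h with h | h
  · rw [mul_inv]
    have h1 : a⁻¹ ≤ e⁻¹ := inv_anti₀ he h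
    have h2 : (0:ℝ) < b⁻¹ := by positivity
    nlinarith [inv_nonneg.mpr ha.le, inv_nonneg.mpr he.le]
  · rw [mul_inv]
    have h1 : b⁻¹ ≤ e⁻¹ := inv_anti₀ he h
    nlinarith [inv_nonneg.mpr hb.le, inv_nonneg.mpr he.le, inv_nonneg.mpr ha.le]

/-- interpolation: `a^(1-α) c^α ≤ a + b` when `0 < a`, `0 ≤ c ≤ b`. -/
lemma interp_le {a b c t : ℝ} (ha : 0 < a) (hc : 0 ≤ c) (hcb : c ≤ b)
    (ht0 : 0 ≤ t) (ht1 : t ≤ 1) :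
    a ^ ((1:ℝ) - t) * c ^ t ≤ a + b := by
  have hb : 0 ≤ b := hc.trans hcb
  have hct : c ^ t ≤ b ^ t := Real.rpow_le_rpow hc hcb ht0
  rcases le_total b a with h | h
  · have : c ^ t ≤ a ^ t := hct.trans (Real.rpow_le_rpow hb h ht0)
    calc a ^ ((1:ℝ) - t) * c ^ t ≤ a ^ ((1:ℝ) - t) * a ^ t := by
          exact mul_le_mul_of_nonneg_left this (Real.rpow_nonneg ha.le _)
      _ = a := by rw [← Real.rpow_add ha]; simp
      _ ≤ a + b := by linarith
  · rcases eq_or_lt_of_le hb with hb0 | hb0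
    · have hc0 : c = 0 := le_antisymm (hcb.trans hb0.symm.le) hc
      subst hc0
      rcases eq_or_lt_of_le ht0 with ht | ht
      · rw [← ht, Real.rpow_zero, sub_zero, Real.rpow_one, mul_one]
        linarith
      · rw [Real.zero_rpow ht.ne']
        simpa using add_nonneg ha.le hb
    · have h1 : a ^ ((1:ℝ) - t) ≤ b ^ ((1:ℝ) - t) :=
        Real.rpow_le_rpow ha.le h (by linarith)
      calc a ^ ((1:ℝ) - t) * c ^ t ≤ b ^ ((1:ℝ) - t) * b ^ t := by
            apply mul_le_mul h1 hct (Real.rpow_nonneg hc _) (Real.rpow_nonneg hb0.le _)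
        _ = b := by rw [← Real.rpow_add hb0]; simp
        _ ≤ a + b := by linarith

lemma nat_tail (N : ℕ) (hN : 1 ≤ N) :
    Summable (fun n : ℕ => if N < n then ((n:ℝ)^2)⁻¹ else 0) ∧
      ∑' n : ℕ, (if N < n then ((n:ℝ)^2)⁻¹ else 0) ≤ (N:ℝ)⁻¹ := by
  set φ : ℕ → ℝ := fun n => ((max (n-1) N : ℕ):ℝ)⁻¹ with hφ
  have hmaxpos : ∀ n : ℕ, 0 < ((max (n-1) N : ℕ):ℝ) := by
    intro n
    have : 1 ≤ max (n-1) N := le_trans hN (le_max_right _ _)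
    exact_mod_cast Nat.lt_of_lt_of_le Nat.zero_lt_one this
  have hanti : ∀ n : ℕ, φ (n+1) ≤ φ n := by
    intro n
    apply inv_anti₀ (hmaxpos n)
    have : max (n-1) N ≤ max (n+1-1) N := by
      apply max_le_max _ le_rfl
      omega
    exact_mod_cast this
  have hnn : ∀ n : ℕ, 0 ≤ φ n - φ (n+1) := fun n => sub_nonneg.mpr (hanti n)
  have hφ0 : Tendsto φ atTop (nhds 0) := by
    apply Tendsto.inv_tendsto_atTop
    apply tendsto_natCast_atTop_atTop.comp
    exact tendsto_atTop_mono (fun n => le_max_left _ _) (tendsto_sub_atTop_nat 1)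
  have htel : HasSum (fun n : ℕ => φ n - φ (n+1)) ((N:ℝ)⁻¹) := by
    rw [hasSum_iff_tendsto_nat_of_nonneg hnn]
    have hps : ∀ n : ℕ, ∑ i ∈ Finset.range n, (φ i - φ (i+1)) = φ 0 - φ n := by
      intro n; exact Finset.sum_range_sub' φ n
    have hφ00 : φ 0 = (N:ℝ)⁻¹ := by simp [hφ]
    have : Tendsto (fun n => φ 0 - φ n) atTop (nhds (φ 0 - 0)) :=
      (tendsto_const_nhds).sub hφ0
    rw [sub_zero] at this
    rw [← hφ00]
    exact (by simpa only [hps] using this)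
  have hbound : ∀ n : ℕ, (if N < n then ((n:ℝ)^2)⁻¹ else 0) ≤ φ n - φ (n+1) := by
    intro n
    by_cases h : N < n
    · rw [if_pos h]
      have hn2 : 2 ≤ n := by omega
      have h1 : max (n-1) N = n-1 := max_eq_left (by omega)
      have h2 : max (n+1-1) N = n := by rw [Nat.add_sub_cancel]; exact max_eq_left (by omega)
      rw [hφ]
      simp only [h1, h2]
      have hc1 : ((n-1 : ℕ):ℝ) = (n:ℝ) - 1 := by
        push_cast [Nat.cast_sub (by omega : 1 ≤ n)]; ring
      rw [hc1]
      have hn1 : (1:ℝ) ≤ (n:ℝ) - 1 := by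
        have : (2:ℝ) ≤ (n:ℝ) := by exact_mod_cast hn2
        linarith
      have hnpos : (0:ℝ) < (n:ℝ) := by positivity
      rw [inv_sub_inv (by linarith) (by linarith), sub_sub_cancel]
      rw [div_eq_mul_inv, one_mul]
      apply inv_anti₀ (by nlinarith)
      nlinarith
    · rw [if_neg h]; exact hnn n
  have hsum : Summable (fun n : ℕ => if N < n then ((n:ℝ)^2)⁻¹ else 0) :=
    Summable.of_nonneg_of_le (fun n => by positivity) hbound htel.summable
  refine ⟨hsum, ?_⟩
  calc ∑' n : ℕ, (if N < n then ((n:ℝ)^2)⁻¹ else 0) ≤ ∑' n, (φ n - φ (n+1)) :=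
        Summable.tsum_le_tsum hbound hsum htel.summable
    _ = (N:ℝ)⁻¹ := htel.tsum_eq

lemma S_bound (M : ℝ) (hM : 1 ≤ M) :
    Summable (fun k : ℤ => (M + 9 * (k:ℝ)^2)⁻¹) ∧
    ∑' k : ℤ, (M + 9 * (k:ℝ)^2)⁻¹ ≤ (13/3) / Real.sqrt M := by
  have hM0 : (0:ℝ) < M := by linarith
  set s := Real.sqrt M with hs
  have hs1 : (1:ℝ) ≤ s := by
    rw [hs, show (1:ℝ) = Real.sqrt 1 by simp]; exact Real.sqrt_le_sqrt hM
  have hs0 : (0:ℝ) < s := by linarith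
  have hss : s * s = M := Real.mul_self_sqrt hM0.le
  set N : ℕ := ⌈s / 3⌉₊ with hNdef
  have hN1 : 1 ≤ N := Nat.one_le_iff_ne_zero.mpr (by
    simp only [hNdef, ne_eq, Nat.ceil_eq_zero, not_le]
    positivity)
  have hNlb : s / 3 ≤ (N:ℝ) := Nat.le_ceil _
  have hNub : (N:ℝ) ≤ s / 3 + 1 := le_of_lt (Nat.ceil_lt_add_one (by positivity))
  have hN0 : (0:ℝ) < (N:ℝ) := by exact_mod_cast hN1
  set u : ℤ → ℝ := fun k => if |k| ≤ (N:ℤ) then M⁻¹ else 0 with hu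
  set w : ℤ → ℝ := fun k => if (N:ℤ) < |k| then (9 * (k:ℝ)^2)⁻¹ else 0 with hw
  have hf0 : ∀ k : ℤ, (0:ℝ) ≤ (M + 9 * (k:ℝ)^2)⁻¹ := fun k => by positivity
  have hw0 : ∀ k, 0 ≤ w k := by
    intro k; rw [hw]; dsimp only; split
    · positivity
    · exact le_refl 0
  have hfle : ∀ k : ℤ, (M + 9 * (k:ℝ)^2)⁻¹ ≤ u k + w k := by
    intro k
    by_cases h : |k| ≤ (N:ℤ)
    · rw [hu, hw]
      simp only [if_pos h, if_neg (not_lt.mpr h)]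
      rw [add_zero]
      apply inv_anti₀ hM0
      nlinarith [sq_nonneg ((k:ℝ))]
    · rw [hu, hw]
      simp only [if_neg h, if_pos (not_le.mp h), zero_add]
      have habs : (N:ℤ) < |k| := not_le.mp h
      have hk1 : (1:ℝ) ≤ |(k:ℝ)| := by
        have : (1:ℤ) ≤ |k| := by omega
        calc (1:ℝ) ≤ ((|k|:ℤ):ℝ) := by exact_mod_cast this
          _ = |(k:ℝ)| := by push_cast; rfl
      have hsq : (1:ℝ) ≤ (k:ℝ)^2 := by
        calc (1:ℝ) = 1 * 1 := by ring
          _ ≤ |(k:ℝ)| * |(k:ℝ)| := mul_le_mul hk1 hk1 (by norm_num) (by positivity)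
          _ = (k:ℝ)^2 := by rw [← abs_mul, ← sq, abs_sq]
      apply inv_anti₀ (by nlinarith)
      nlinarith
  -- sum of u
  have husupp : ∀ k ∉ Finset.Icc (-(N:ℤ)) (N:ℤ), u k = 0 := by
    intro k hk
    rw [Finset.mem_Icc] at hk
    rw [hu]; simp only [ite_eq_right_iff]
    intro habs; exfalso; rw [abs_le] at habs; omega
  have hu_summ : Summable u := summable_of_ne_finset_zero husupp
  have hu_tsum : ∑' k, u k = ((2*N+1 : ℕ):ℝ) * M⁻¹ := by
    rw [tsum_eq_sum husupp]
    have he : ∀ k ∈ Finset.Icc (-(N:ℤ)) (N:ℤ), u k = M⁻¹ := by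
      intro k hk; rw [Finset.mem_Icc] at hk; rw [hu]
      exact if_pos (abs_le.mpr hk)
    rw [Finset.sum_congr rfl he, Finset.sum_const, nsmul_eq_mul]
    congr 1
    rw [Int.card_Icc]
    have : ((N:ℤ) + 1 - -(N:ℤ)) = ((2*N+1 : ℕ):ℤ) := by push_cast; ring
    rw [this, Int.toNat_natCast]
  -- sum of w via ℕ-parametrisation
  obtain ⟨htail_s, htail_b⟩ := nat_tail N hN1
  set g : ℕ → ℝ := fun n => if N < n then ((n:ℝ)^2)⁻¹ else 0 with hg
  have hg0 : ∀ n, 0 ≤ g n := by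
    intro n; rw [hg]; dsimp only; split
    · positivity
    · exact le_refl 0
  have hw_nat : (fun n : ℕ => w (n : ℤ)) = fun n => (9:ℝ)⁻¹ * g n := by
    funext n
    rw [hw, hg]
    dsimp only
    by_cases h : N < n
    · rw [if_pos (by rw [Int.abs_natCast]; exact_mod_cast h), if_pos h,
        mul_inv, Int.cast_natCast]
    · rw [if_neg (by rw [Int.abs_natCast]; exact_mod_cast h), if_neg h, mul_zero]
  have hw_neg : (fun n : ℕ => w (-((n:ℤ) + 1))) = fun n => (9:ℝ)⁻¹ * g (n+1) := by
    funext n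
    rw [hw, hg]
    dsimp only
    have habs : |(-((n:ℤ)+1))| = ((n:ℤ)+1) := by rw [abs_neg]; exact abs_of_nonneg (by omega)
    by_cases h : N < n + 1
    · rw [if_pos (by rw [habs]; exact_mod_cast h), if_pos h, mul_inv]
      congr 2
      push_cast; ring
    · rw [if_neg (by rw [habs]; exact_mod_cast h), if_neg h, mul_zero]
  have hshift_s : Summable (fun n : ℕ => g (n+1)) := (summable_nat_add_iff 1).mpr htail_s
  have hshift_b : ∑' n : ℕ, g (n+1) ≤ (N:ℝ)⁻¹ := by
    refine le_trans ?_ htail_b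
    rw [Summable.tsum_eq_zero_add htail_s]
    have : 0 ≤ g 0 := hg0 0
    linarith [(tsum_nonneg (fun n => hg0 (n+1)) : (0:ℝ) ≤ ∑' n : ℕ, g (n+1))]
  have hwnat_s : Summable (fun n : ℕ => w (n:ℤ)) := by rw [hw_nat]; exact htail_s.mul_left _
  have hwneg_s : Summable (fun n : ℕ => w (-((n:ℤ)+1))) := by
    rw [hw_neg]; exact hshift_s.mul_left _
  have hw_summ : Summable w := Summable.of_nat_of_neg_add_one hwnat_s hwneg_s
  have hw_tsum : ∑' k, w k ≤ (2/9) * (N:ℝ)⁻¹ := by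
    rw [tsum_of_nat_of_neg_add_one hwnat_s hwneg_s, hw_nat, hw_neg,
      tsum_mul_left, tsum_mul_left]
    have h1 : ∑' n : ℕ, g n ≤ (N:ℝ)⁻¹ := htail_b
    have h2 := hshift_b
    rw [show (2:ℝ)/9 = 9⁻¹ + 9⁻¹ by norm_num, add_mul]
    gcongr <;> simp
  -- combine
  have hsum : Summable (fun k : ℤ => (M + 9 * (k:ℝ)^2)⁻¹) :=
    Summable.of_nonneg_of_le hf0 hfle (hu_summ.add hw_summ)
  refine ⟨hsum, ?_⟩
  have hle : ∑' k : ℤ, (M + 9 * (k:ℝ)^2)⁻¹ ≤ ((2*N+1:ℕ):ℝ) * M⁻¹ + (2/9) * (N:ℝ)⁻¹ := by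
    calc ∑' k : ℤ, (M + 9 * (k:ℝ)^2)⁻¹ ≤ ∑' k, (u k + w k) :=
          Summable.tsum_le_tsum hfle hsum (hu_summ.add hw_summ)
      _ = ∑' k, u k + ∑' k, w k := Summable.tsum_add hu_summ hw_summ
      _ ≤ ((2*N+1:ℕ):ℝ) * M⁻¹ + (2/9) * (N:ℝ)⁻¹ := by rw [hu_tsum]; linarith
  refine hle.trans ?_
  -- numeric estimate
  have hNcast : ((2*N+1:ℕ):ℝ) = 2*(N:ℝ)+1 := by push_cast; ring
  have hMinv : M⁻¹ = s⁻¹ * s⁻¹ := by rw [← hss, mul_inv]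
  have hNinv : (N:ℝ)⁻¹ ≤ 3 / s := by
    rw [div_eq_mul_inv]
    calc (N:ℝ)⁻¹ ≤ (s/3)⁻¹ := inv_anti₀ (by positivity) hNlb
      _ = 3 * s⁻¹ := by rw [inv_div]; ring
  have hsinv0 : (0:ℝ) < s⁻¹ := by positivity
  have hsinv1 : s⁻¹ ≤ 1 := by
    rw [inv_le_one_iff₀]; right; exact hs1
  have hs_mul : s * s⁻¹ = 1 := mul_inv_cancel₀ hs0.ne'
  have e3 : s⁻¹ * s⁻¹ ≤ s⁻¹ := mul_le_of_le_one_left hsinv0.le hsinv1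
  have e1 : ((2*N+1:ℕ):ℝ) * M⁻¹ ≤ (2/3) * (s*s⁻¹) * s⁻¹ + 3*(s⁻¹*s⁻¹) := by
    rw [hNcast, hMinv]
    have hN3 : (2*(N:ℝ)+1) ≤ 2*(s/3+1)+1 := by linarith
    calc (2*(N:ℝ)+1) * (s⁻¹*s⁻¹) ≤ (2*(s/3+1)+1) * (s⁻¹*s⁻¹) :=
          mul_le_mul_of_nonneg_right hN3 (by positivity)
      _ = (2/3) * (s*s⁻¹) * s⁻¹ + 3*(s⁻¹*s⁻¹) := by ring
  rw [hs_mul] at e1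
  have e4 : (2/9) * (N:ℝ)⁻¹ ≤ (2/3) * s⁻¹ := by
    calc (2/9) * (N:ℝ)⁻¹ ≤ (2/9) * (3/s) :=
          mul_le_mul_of_nonneg_left hNinv (by norm_num)
      _ = (2/3) * s⁻¹ := by rw [div_eq_mul_inv]; ring
  have e5 : (13:ℝ)/3/s = (13/3) * s⁻¹ := by rw [div_eq_mul_inv]
  rw [e5]
  linarith

lemma opOfHS (F : ℤ → ℤ → ℂ) (c : ℝ) (hc : 0 ≤ c)
    (hF : Summable fun p : ℤ × ℤ => ‖F p.1 p.2‖ ^ 2)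
    (hFc : (∑' p : ℤ × ℤ, ‖F p.1 p.2‖ ^ 2) ≤ c ^ 2) :
    MatOpNormLE F c := by
  have h2 : ((2:ℝ≥0∞)).toReal = 2 := by norm_num
  have hpow : ∀ x : ℝ, 0 ≤ x → x ^ ((2:ℝ≥0∞)).toReal = x ^ 2 := by
    intro x hx
    rw [h2, show ((2:ℝ)) = ((2:ℕ):ℝ) by norm_num, Real.rpow_natCast]
  -- summability of rows
  have hrow : ∀ k : ℤ, Summable fun j => ‖F k j‖ ^ 2 := fun k => hF.prod_factor k
  set R : ℤ → ℝ := fun k => ∑' j, ‖F k j‖ ^ 2 with hR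
  have hR0 : ∀ k, 0 ≤ R k := fun k => tsum_nonneg (fun j => sq_nonneg _)
  have hRsum : Summable R := by
    have := (summable_prod_of_nonneg (fun p => sq_nonneg ‖F p.1 p.2‖)).mp hF
    exact this.2
  have hRtsum : ∑' k, R k ≤ c ^ 2 := by
    rw [hR]
    rw [← Summable.tsum_prod' hF (fun k => hrow k)] at *
    exact hFc
  -- for each a in lp 2
  have ha2 : ∀ a : lp (fun _ : ℤ => ℂ) 2, Summable fun j : ℤ => ‖a j‖ ^ 2 := by
    intro a
    have := (lp.memℓp a).summable (by norm_num : 0 < ((2:ℝ≥0∞)).toReal)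
    refine this.congr fun j => hpow _ (norm_nonneg _)
  have hcs := fun (a : lp (fun _ : ℤ => ℂ) 2) (k : ℤ) =>
    cs_tsum (fun j => ‖F k j‖) (fun j => ‖a j‖) (fun j => norm_nonneg _)
      (fun j => norm_nonneg _) (hrow k) (ha2 a)
  have hFA : ∀ (a : lp (fun _ : ℤ => ℂ) 2) (k : ℤ), Summable fun j => F k j * a j := by
    intro a k
    apply Summable.of_norm
    refine ((hcs a k).1).congr fun j => ?_
    rw [norm_mul]
  set g : lp (fun _ : ℤ => ℂ) 2 → ℤ → ℂ := fun a k => ∑' j, F k j * a j with hg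
  set na : lp (fun _ : ℤ => ℂ) 2 → ℝ := fun a => Real.sqrt (∑' j, ‖a j‖ ^ 2) with hna
  have hgbound : ∀ a k, ‖g a k‖ ≤ Real.sqrt (R k) * na a := by
    intro a k
    calc ‖g a k‖ ≤ ∑' j, ‖F k j * a j‖ := norm_tsum_le_tsum_norm
          (((hcs a k).1).congr fun j => by rw [norm_mul])
      _ = ∑' j, ‖F k j‖ * ‖a j‖ := by
          congr 1; funext j; rw [norm_mul]
      _ ≤ Real.sqrt (R k) * na a := (hcs a k).2
  have hgsq : ∀ a k, ‖g a k‖ ^ 2 ≤ R k * (na a) ^ 2 := by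
    intro a k
    have h1 : (0:ℝ) ≤ Real.sqrt (R k) * na a := by positivity
    calc ‖g a k‖ ^ 2 ≤ (Real.sqrt (R k) * na a) ^ 2 := by
          apply sq_le_sq' _ (hgbound a k)
          calc -(Real.sqrt (R k) * na a) ≤ 0 := by linarith
            _ ≤ ‖g a k‖ := norm_nonneg _
      _ = R k * (na a) ^ 2 := by
          rw [mul_pow, Real.sq_sqrt (hR0 k)]
  have hgsum : ∀ a, Summable fun k => ‖g a k‖ ^ 2 := by
    intro a
    exact Summable.of_nonneg_of_le (fun k => sq_nonneg _) (fun k => hgsq a k)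
      (hRsum.mul_right _)
  have hmem : ∀ a, Memℓp (g a) (2:ℝ≥0∞) := by
    intro a
    apply memℓp_gen
    refine (hgsum a).congr fun k => (hpow _ (norm_nonneg _)).symm
  -- the linear map
  set L : lp (fun _ : ℤ => ℂ) 2 →ₗ[ℂ] lp (fun _ : ℤ => ℂ) 2 :=
    { toFun := fun a => ⟨g a, hmem a⟩
      map_add' := by
        intro a b
        apply lp.ext
        funext k
        have : g (a + b) k = g a k + g b k := by
          rw [hg]
          dsimp only
          rw [← Summable.tsum_add (hFA a k) (hFA b k)]
          congr 1; funext j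
          rw [lp.coeFn_add, Pi.add_apply, mul_add]
        simp [lp.coeFn_add, Pi.add_apply]
        exact this
      map_smul' := by
        intro r a
        apply lp.ext
        funext k
        have : g (r • a) k = r * g a k := by
          rw [hg]
          dsimp only
          rw [← tsum_mul_left]
          congr 1; funext j
          rw [lp.coeFn_smul, Pi.smul_apply, smul_eq_mul]; ring
        simpa [lp.coeFn_smul, Pi.smul_apply] using this } with hL
  have hbound : ∀ a, ‖L a‖ ≤ c * ‖a‖ := by
    intro a
    apply lp.norm_le_of_tsum_le (by norm_num : 0 < ((2:ℝ≥0∞)).toReal) (by positivity)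
    have hna_eq : (na a) ^ 2 = ‖a‖ ^ 2 := by
      have := lp.norm_rpow_eq_tsum (p := 2) (by norm_num) a
      rw [hpow _ (norm_nonneg a)] at this
      rw [hna, Real.sq_sqrt (tsum_nonneg fun j => sq_nonneg _), this]
      exact (tsum_congr fun j => (hpow _ (norm_nonneg _))).symm
    have key : ∑' k, ‖g a k‖ ^ 2 ≤ (c * ‖a‖) ^ 2 := by
      calc ∑' k, ‖g a k‖ ^ 2 ≤ ∑' k, R k * (na a) ^ 2 :=
            Summable.tsum_le_tsum (fun k => hgsq a k) (hgsum a) (hRsum.mul_right _)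
        _ = (∑' k, R k) * (na a) ^ 2 := tsum_mul_right
        _ ≤ c ^ 2 * (na a) ^ 2 := by
            apply mul_le_mul_of_nonneg_right hRtsum (sq_nonneg _)
        _ = (c * ‖a‖) ^ 2 := by rw [hna_eq]; ring
    calc ∑' k, ‖(L a) k‖ ^ ((2:ℝ≥0∞)).toReal = ∑' k, ‖g a k‖ ^ 2 :=
          tsum_congr fun k => hpow _ (norm_nonneg _)
      _ ≤ (c * ‖a‖) ^ 2 := key
      _ = (c * ‖a‖) ^ ((2:ℝ≥0∞)).toReal := (hpow _ (by positivity)).symm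
  refine ⟨L.mkContinuous c hbound, L.mkContinuous_norm_le hc hbound, fun a k => rfl⟩

lemma row_core (m : ℕ) (hm : 0 < m) (α M K : ℝ) (hα0 : 0 ≤ α) (hα1 : α ≤ 1) (hM : 1 ≤ M)
    (hK3 : (3:ℝ)^(2*m) ≤ K) (hK4 : K ≤ (4:ℝ)^(2*m))
    (A d : ℤ → ℝ) (hA : ∀ k, A k = M + K * (k:ℝ)^(2*m))
    (hdlow : ∀ k, A k ≤ 2 * d k) (hdpos : ∀ k, 0 < d k)
    (hSA_s : Summable (fun k : ℤ => (A k)⁻¹))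
    (hSb : ∑' k : ℤ, (A k)⁻¹ ≤ (13/3) * (Real.sqrt M)⁻¹) (l : ℤ) :
    Summable (fun k : ℤ => (d k * d (k-l))⁻¹) ∧
      ∑' k : ℤ, (d k * d (k-l))⁻¹ ≤
        wt l ^ (2 * -((m:ℝ)*α)) *
          (((2:ℝ)^(2*m+1))^2 * (M ^ (-((1 - α) / 2 + 1 / 4)))^2) := by
  have hM0 : (0:ℝ) < M := by linarith
  have hkpow0 : ∀ y : ℝ, (0:ℝ) ≤ y ^ (2*m) := fun y => (even_two_mul m).pow_nonneg y
  have h32m : (9:ℝ) ≤ 3^(2*m) := by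
    calc (9:ℝ) = 3 ^ 2 := by norm_num
      _ ≤ 3 ^ (2*m) := pow_le_pow_right₀ (by norm_num) (by omega)
  have hK0 : (0:ℝ) < K := by linarith
  have hApos : ∀ k, 0 < A k := fun k => by
    rw [hA]; nlinarith [hkpow0 ((k:ℝ))]
  have hS0 : 0 ≤ ∑' k : ℤ, (A k)⁻¹ := tsum_nonneg (fun k => inv_nonneg.mpr (hApos k).le)
  have htrans_s : Summable (fun k : ℤ => (A (k - l))⁻¹) :=
    (Equiv.subRight l).summable_iff.mpr hSA_s
  have htrans_t : ∑' k : ℤ, (A (k - l))⁻¹ = ∑' k : ℤ, (A k)⁻¹ :=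
    (Equiv.subRight l).tsum_eq (fun k => (A k)⁻¹)
  -- the shifted denominator
  set E : ℝ := M + (K / 2^(2*m)) * (l:ℝ)^(2*m) with hE
  have hE0 : 0 < E := by
    have h2m : (0:ℝ) < 2^(2*m) := by positivity
    have := mul_nonneg (le_of_lt (div_pos hK0 h2m)) (hkpow0 ((l:ℝ)))
    rw [hE]; linarith
  have step : ∀ y : ℝ, |(l:ℝ)|/2 ≤ |y| → E ≤ M + K * y^(2*m) := by
    intro y hy
    rw [hE]
    have h1 : (|(l:ℝ)|/2)^(2*m) ≤ |y|^(2*m) := pow_le_pow_left₀ (by positivity) hy _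
    have h2 : (|(l:ℝ)|/2)^(2*m) = (l:ℝ)^(2*m) / 2^(2*m) := by
      rw [div_pow, (even_two_mul m).pow_abs]
    have h3 : |y|^(2*m) = y^(2*m) := (even_two_mul m).pow_abs _
    rw [h2, h3] at h1
    have h4 := mul_le_mul_of_nonneg_left h1 hK0.le
    have heq : K * ((l:ℝ)^(2*m) / 2^(2*m)) = (K / 2^(2*m)) * (l:ℝ)^(2*m) := by ring
    linarith [heq ▸ h4]
  have hEor : ∀ k : ℤ, E ≤ A k ∨ E ≤ A (k - l) := by
    intro k
    have habs : |(l:ℝ)| ≤ |(k:ℝ)| + |((k - l : ℤ):ℝ)| := by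
      push_cast
      calc |(l:ℝ)| = |(k:ℝ) - ((k:ℝ) - (l:ℝ))| := by congr 1; ring
        _ ≤ |(k:ℝ)| + |(k:ℝ) - (l:ℝ)| := abs_sub _ _
    rcases le_total (|((k - l : ℤ):ℝ)|) (|(k:ℝ)|) with h | h
    · left; rw [hA]; exact step (k:ℝ) (by linarith)
    · right; rw [hA]; exact step (((k - l : ℤ)):ℝ) (by linarith)
  have hpair : ∀ k : ℤ, (d k * d (k-l))⁻¹ ≤ 4 * (E⁻¹ * ((A k)⁻¹ + (A (k-l))⁻¹)) := by
    intro k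
    have hk1 := hdlow k
    have hk2 := hdlow (k - l)
    have hA1 := hApos k
    have hA2 := hApos (k - l)
    have h1 : (d k * d (k-l))⁻¹ ≤ ((A k / 2) * (A (k-l) / 2))⁻¹ := by
      apply inv_anti₀ (mul_pos (by linarith) (by linarith))
      apply mul_le_mul (by linarith) (by linarith) (by linarith) (hdpos k).le
    have h2 : ((A k / 2) * (A (k-l) / 2))⁻¹ = 4 * (A k * A (k-l))⁻¹ := by
      field_simp
      norm_num
    have h3 : (A k * A (k-l))⁻¹ ≤ E⁻¹ * ((A k)⁻¹ + (A (k-l))⁻¹) :=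
      prod_inv_le hA1 hA2 hE0 (hEor k)
    calc (d k * d (k-l))⁻¹ ≤ ((A k / 2) * (A (k-l) / 2))⁻¹ := h1
      _ = 4 * (A k * A (k-l))⁻¹ := h2
      _ ≤ 4 * (E⁻¹ * ((A k)⁻¹ + (A (k-l))⁻¹)) := by linarith
  have hmaj_s : Summable (fun k : ℤ => 4 * (E⁻¹ * ((A k)⁻¹ + (A (k-l))⁻¹))) :=
    ((hSA_s.add htrans_s).mul_left E⁻¹).mul_left 4
  have hrow_s : Summable (fun k : ℤ => (d k * d (k-l))⁻¹) :=
    Summable.of_nonneg_of_le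
      (fun k => inv_nonneg.mpr (mul_pos (hdpos k) (hdpos (k-l))).le) hpair hmaj_s
  refine ⟨hrow_s, ?_⟩
  have hrow_b : ∑' k : ℤ, (d k * d (k-l))⁻¹ ≤ 8 * E⁻¹ * ∑' k : ℤ, (A k)⁻¹ := by
    calc ∑' k : ℤ, (d k * d (k-l))⁻¹
        ≤ ∑' k : ℤ, 4 * (E⁻¹ * ((A k)⁻¹ + (A (k-l))⁻¹)) := Summable.tsum_le_tsum hpair hrow_s hmaj_s
      _ = 4 * (E⁻¹ * ((∑' k : ℤ, (A k)⁻¹) + ∑' k : ℤ, (A (k-l))⁻¹)) := by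
          rw [tsum_mul_left, tsum_mul_left, Summable.tsum_add hSA_s htrans_s]
      _ = 8 * E⁻¹ * ∑' k : ℤ, (A k)⁻¹ := by rw [htrans_t]; ring
  -- interpolation
  have hwt1 : (1:ℝ) ≤ wt l := by rw [wt]; have := abs_nonneg ((l:ℝ)); linarith
  have hwt0 : (0:ℝ) < wt l := by linarith
  set W : ℝ := wt l ^ (((2*m:ℕ):ℝ) * α) with hW
  have hW1 : (1:ℝ) ≤ W := Real.one_le_rpow hwt1 (by positivity)
  have hW0 : 0 < W := by linarith
  set P : ℝ := (K / 4^(2*m)) ^ α with hP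
  have hKq0 : (0:ℝ) < K / 4^(2*m) := by positivity
  have hKq1 : K / 4^(2*m) ≤ 1 := by
    rw [div_le_one (by positivity)]; exact hK4
  have hP0 : 0 < P := Real.rpow_pos_of_pos hKq0 _
  have hPlow : (3:ℝ)^(2*m) / 4^(2*m) ≤ P := by
    calc (3:ℝ)^(2*m) / 4^(2*m) ≤ K / 4^(2*m) := by
          apply div_le_div_of_nonneg_right hK3 (by positivity)  -- check name
      _ = (K / 4^(2*m)) ^ (1:ℝ) := (Real.rpow_one _).symm
      _ ≤ P := Real.rpow_le_rpow_of_exponent_ge hKq0 hKq1 hα1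
  have hinterp : M ^ ((1:ℝ) - α) * (P * W) ≤ E := by
    have hmr : ((K / 4^(2*m)) * wt l ^ (2*m)) ^ α = P * W := by
      rw [Real.mul_rpow hKq0.le (pow_nonneg hwt0.le _), hP, hW]
      congr 1
      rw [← Real.rpow_natCast (wt l) (2*m), ← Real.rpow_mul hwt0.le]
    rcases eq_or_ne l 0 with rfl | hl
    · have hwt : wt (0:ℤ) = 1 := by rw [wt]; simp
      rw [hE]
      have hz : ((0:ℤ):ℝ) ^ (2*m) = 0 := by
        rw [Int.cast_zero]; exact zero_pow (by omega)
      rw [hz, mul_zero, add_zero]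
      have h1 : P * W ≤ 1 := by
        have hP1 : P ≤ 1 := Real.rpow_le_one hKq0.le hKq1 hα0
        have hWe : W = 1 := by rw [hW, hwt, Real.one_rpow]
        rw [hWe, mul_one]; exact hP1
      calc M ^ ((1:ℝ) - α) * (P * W) ≤ M ^ ((1:ℝ) - α) * 1 :=
            mul_le_mul_of_nonneg_left h1 (Real.rpow_nonneg hM0.le _)
        _ = M ^ ((1:ℝ) - α) := mul_one _
        _ ≤ M ^ (1:ℝ) := Real.rpow_le_rpow_of_exponent_le hM (by linarith)
        _ = M := Real.rpow_one M
    · rw [← hmr, hE]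
      apply interp_le hM0 (by positivity) ?_ hα0 hα1
      have hl1 : (1:ℝ) ≤ |(l:ℝ)| := by
        have h2 : (1:ℤ) ≤ |l| := Int.one_le_abs (by omega)
        calc (1:ℝ) ≤ ((|l|:ℤ):ℝ) := by exact_mod_cast h2
          _ = |(l:ℝ)| := by push_cast; rfl
      have hwt2 : wt l ≤ 2 * |(l:ℝ)| := by rw [wt]; linarith
      have h2 : wt l ^ (2*m) ≤ (2 * |(l:ℝ)|)^(2*m) :=
        pow_le_pow_left₀ hwt0.le hwt2 _
      have h3 : (2 * |(l:ℝ)|)^(2*m) = 2^(2*m) * (l:ℝ)^(2*m) := by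
        rw [mul_pow, (even_two_mul m).pow_abs]
      have h6 : K / 4^(2*m) * (2^(2*m) * (l:ℝ)^(2*m)) = K / 2^(2*m) * (l:ℝ)^(2*m) := by
        rw [show (4:ℝ)^(2*m) = 2^(2*m) * 2^(2*m) from by rw [← mul_pow]; norm_num]
        field_simp
      calc K / 4^(2*m) * wt l ^ (2*m) ≤ K / 4^(2*m) * (2^(2*m) * (l:ℝ)^(2*m)) :=
            mul_le_mul_of_nonneg_left (h2.trans_eq h3) (by positivity)
        _ = K / 2^(2*m) * (l:ℝ)^(2*m) := h6
  -- final assembly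
  have hZ0 : 0 < M ^ ((1:ℝ) - α) * (P * W) :=
    mul_pos (Real.rpow_pos_of_pos hM0 _) (mul_pos hP0 hW0)
  have hEinv : E⁻¹ ≤ (M ^ ((1:ℝ) - α))⁻¹ * P⁻¹ * W⁻¹ := by
    calc E⁻¹ ≤ (M ^ ((1:ℝ) - α) * (P * W))⁻¹ := inv_anti₀ hZ0 hinterp
      _ = (M ^ ((1:ℝ) - α))⁻¹ * P⁻¹ * W⁻¹ := by rw [mul_inv, mul_inv]; ring
  have hPinv : P⁻¹ ≤ (4:ℝ)^(2*m) / 3^(2*m) := by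
    have h30 : (0:ℝ) < 3^(2*m) / 4^(2*m) := by positivity
    calc P⁻¹ ≤ ((3:ℝ)^(2*m) / 4^(2*m))⁻¹ := inv_anti₀ h30 hPlow
      _ = (4:ℝ)^(2*m) / 3^(2*m) := by rw [inv_div]
  have hMM : (M ^ ((1:ℝ) - α))⁻¹ * (Real.sqrt M)⁻¹ = (M ^ (-((1 - α) / 2 + 1 / 4)))^2 := by
    rw [Real.sqrt_eq_rpow, ← Real.rpow_neg hM0.le, ← Real.rpow_neg hM0.le,
      ← Real.rpow_add hM0, sq, ← Real.rpow_add hM0]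
    congr 1
    ring
  have hWneg : wt l ^ (2 * -((m:ℝ)*α)) = W⁻¹ := by
    rw [hW, ← Real.rpow_neg hwt0.le]
    congr 1
    push_cast
    ring
  rw [hWneg]
  have hnum : (8:ℝ) * (13/3) * ((4:ℝ)^(2*m) / 3^(2*m)) ≤ ((2:ℝ)^(2*m+1))^2 := by
    have h4 : ((2:ℝ)^(2*m+1))^2 = 4 * 4^(2*m) := by
      rw [← pow_mul, show (2*m+1)*2 = 2*(2*m)+2 by ring, pow_add, pow_mul]
      norm_num
      ring
    rw [h4]
    have h9 : (4:ℝ)^(2*m)/3^(2*m) ≤ 4^(2*m)/9 := by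
      gcongr
    have h40 : (0:ℝ) < (4:ℝ)^(2*m) := by positivity
    nlinarith [h9]
  have hWinv0 : (0:ℝ) ≤ W⁻¹ := inv_nonneg.mpr hW0.le
  have hMx2 : (0:ℝ) ≤ (M ^ (-((1 - α) / 2 + 1 / 4)))^2 := sq_nonneg _
  calc ∑' k : ℤ, (d k * d (k-l))⁻¹ ≤ 8 * E⁻¹ * ∑' k : ℤ, (A k)⁻¹ := hrow_b
    _ ≤ 8 * ((M ^ ((1:ℝ) - α))⁻¹ * P⁻¹ * W⁻¹) * ((13/3) * (Real.sqrt M)⁻¹) := by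
        apply mul_le_mul (mul_le_mul_of_nonneg_left hEinv (by norm_num)) hSb hS0
        positivity
    _ = 8 * (13/3) * P⁻¹ * ((M ^ ((1:ℝ) - α))⁻¹ * (Real.sqrt M)⁻¹) * W⁻¹ := by ring
    _ ≤ 8 * (13/3) * ((4:ℝ)^(2*m) / 3^(2*m)) * ((M ^ ((1:ℝ) - α))⁻¹ * (Real.sqrt M)⁻¹) * W⁻¹ := by
        apply mul_le_mul_of_nonneg_right _ hWinv0
        apply mul_le_mul_of_nonneg_right _ ?_
        · apply mul_le_mul_of_nonneg_left hPinv (by norm_num)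
        · rw [hMM]; exact hMx2
    _ = 8 * (13/3) * ((4:ℝ)^(2*m) / 3^(2*m)) * (M ^ (-((1 - α) / 2 + 1 / 4)))^2 * W⁻¹ := by
        rw [hMM]
    _ ≤ ((2:ℝ)^(2*m+1))^2 * (M ^ (-((1 - α) / 2 + 1 / 4)))^2 * W⁻¹ := by
        apply mul_le_mul_of_nonneg_right _ hWinv0
        exact mul_le_mul_of_nonneg_right hnum hMx2
    _ = W⁻¹ * (((2:ℝ)^(2*m+1))^2 * (M ^ (-((1 - α) / 2 + 1 / 4)))^2) := by ring

lemma A_sum (m : ℕ) (hm : 0 < m) (M K : ℝ) (hM : 1 ≤ M) (hK3 : (3:ℝ)^(2*m) ≤ K) :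
    Summable (fun k : ℤ => (M + K * (k:ℝ)^(2*m))⁻¹) ∧
    ∑' k : ℤ, (M + K * (k:ℝ)^(2*m))⁻¹ ≤ (13/3) * (Real.sqrt M)⁻¹ := by
  have hM0 : (0:ℝ) < M := by linarith
  have hkpow0 : ∀ y : ℝ, (0:ℝ) ≤ y ^ (2*m) := fun y => (even_two_mul m).pow_nonneg y
  have h32m : (9:ℝ) ≤ 3^(2*m) := by
    calc (9:ℝ) = 3 ^ 2 := by norm_num
      _ ≤ 3 ^ (2*m) := pow_le_pow_right₀ (by norm_num) (by omega)
  have hK0 : (0:ℝ) < K := by linarith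
  obtain ⟨hS9_s, hS9_b⟩ := S_bound M hM
  have hle : ∀ k : ℤ, (M + K * (k:ℝ)^(2*m))⁻¹ ≤ (M + 9*(k:ℝ)^2)⁻¹ := by
    intro k
    apply inv_anti₀ (by nlinarith [sq_nonneg ((k:ℝ))])
    have hx : (k:ℝ)^2 ≤ (k:ℝ)^(2*m) := by
      rcases eq_or_ne k 0 with rfl | hk
      · norm_num [zero_pow (show 2*m ≠ 0 by omega)]
      · have h1 : (1:ℝ) ≤ |(k:ℝ)| := by
          have h2 : (1:ℤ) ≤ |k| := Int.one_le_abs (by omega)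
          calc (1:ℝ) ≤ ((|k|:ℤ):ℝ) := by exact_mod_cast h2
            _ = |(k:ℝ)| := by push_cast; rfl
        calc (k:ℝ)^2 = |(k:ℝ)|^2 := (sq_abs _).symm
          _ ≤ |(k:ℝ)|^(2*m) := pow_le_pow_right₀ h1 (by omega)
          _ = (k:ℝ)^(2*m) := (even_two_mul m).pow_abs _
    nlinarith [hkpow0 ((k:ℝ))]
  have hnn : ∀ k : ℤ, (0:ℝ) ≤ (M + K * (k:ℝ)^(2*m))⁻¹ := by
    intro k
    apply inv_nonneg.mpr
    nlinarith [hkpow0 ((k:ℝ))]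
  have hs : Summable (fun k : ℤ => (M + K * (k:ℝ)^(2*m))⁻¹) :=
    Summable.of_nonneg_of_le hnn hle hS9_s
  refine ⟨hs, ?_⟩
  calc ∑' k : ℤ, (M + K * (k:ℝ)^(2*m))⁻¹ ≤ ∑' k : ℤ, (M + 9*(k:ℝ)^2)⁻¹ :=
        Summable.tsum_le_tsum hle hs hS9_s
    _ ≤ (13/3) / Real.sqrt M := hS9_b
    _ = (13/3) * (Real.sqrt M)⁻¹ := by rw [div_eq_mul_inv]

lemma diag_lower (m : ℕ) (M : ℝ) (lam : ℂ) (hlam : lam.re ≤ |lam.im| - M) (k : ℤ) :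
    M + Real.pi^(2*m) * (k:ℝ)^(2*m) ≤ 2 * diagAbs m lam k := by
  have hπ0 : (0:ℝ) < Real.pi := Real.pi_pos
  have hkpow0 : (0:ℝ) ≤ (k:ℝ) ^ (2*m) := (even_two_mul m).pow_nonneg _
  unfold diagAbs
  set τ : ℝ := Real.pi^(2*m) * (k:ℝ)^(2*m) with hτ
  have hτ0 : 0 ≤ τ := mul_nonneg (by positivity) hkpow0
  have hcast : ((k:ℂ)^(2*m) * (Real.pi:ℂ)^(2*m)) = ((τ:ℝ):ℂ) := by
    rw [hτ]; push_cast; ring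
  rw [hcast]
  have h1 : |lam.im| ≤ ‖lam - (τ:ℂ)‖ := by
    have := Complex.abs_im_le_norm (lam - (τ:ℂ))
    simpa using this
  have h2 : |lam.re - τ| ≤ ‖lam - (τ:ℂ)‖ := by
    have := Complex.abs_re_le_norm (lam - (τ:ℂ))
    simpa using this
  by_cases hcase : M + τ ≤ 2 * |lam.im|
  · linarith
  · push_neg at hcase
    have h4 : -(lam.re - τ) ≤ |lam.re - τ| := neg_le_abs _
    linarith

theorem statement3 (m : ℕ) (hm : 0 < m) (α M : ℝ)
    (hα0 : 0 ≤ α) (hα1 : α ≤ 1) (hM : 1 ≤ M)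
    (v : ℤ → ℂ) (hv : MemHs (-((m : ℝ) * α)) v) (hv0 : v 0 = 0) :
    ∀ lam ∈ ExtSet M,
      Real.sqrt (∑' p : ℤ × ℤ, ‖v (p.1 - p.2)‖ ^ 2 / (diagAbs m lam p.1 * diagAbs m lam p.2))
        ≤ 2 ^ (2 * m + 1) * hsNorm (-((m : ℝ) * α)) v * M ^ (-((1 - α) / 2 + 1 / 4)) ∧
      MatOpNormLE (Smat m v lam)
        (2 ^ (2 * m + 1) * hsNorm (-((m : ℝ) * α)) v * M ^ (-((1 - α) / 2 + 1 / 4))) := by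
  intro lam hlam
  have hπ3 : (3:ℝ) ≤ Real.pi := by linarith [Real.pi_gt_three]
  have hπ4 : Real.pi ≤ 4 := Real.pi_le_four
  have hM0 : (0:ℝ) < M := by linarith
  have hK3 : (3:ℝ)^(2*m) ≤ Real.pi^(2*m) := pow_le_pow_left₀ (by norm_num) hπ3 _
  have hK4 : Real.pi^(2*m) ≤ (4:ℝ)^(2*m) := pow_le_pow_left₀ (by positivity) hπ4 _
  have hdlow : ∀ k : ℤ, M + Real.pi^(2*m) * (k:ℝ)^(2*m) ≤ 2 * diagAbs m lam k :=
    diag_lower m M lam hlam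
  have hdpos : ∀ k : ℤ, 0 < diagAbs m lam k := by
    intro k
    have h1 := hdlow k
    have h2 : (0:ℝ) ≤ (k:ℝ) ^ (2*m) := (even_two_mul m).pow_nonneg _
    nlinarith [mul_nonneg (pow_nonneg Real.pi_pos.le (2*m)) h2]
  obtain ⟨hSA_s, hSA_b⟩ := A_sum m hm M (Real.pi^(2*m)) hM hK3
  have keyl := fun l : ℤ => row_core m hm α M (Real.pi^(2*m)) hα0 hα1 hM hK3 hK4
    (fun k : ℤ => M + Real.pi^(2*m) * (k:ℝ)^(2*m)) (diagAbs m lam) (fun k => rfl)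
    hdlow hdpos hSA_s hSA_b l
  -- notation
  set nv : ℝ := hsNorm (-((m : ℝ) * α)) v with hnv
  set B : ℝ := ((2:ℝ)^(2*m+1))^2 * (M ^ (-((1 - α) / 2 + 1 / 4)))^2 with hB
  have hMx0 : (0:ℝ) < M ^ (-((1 - α) / 2 + 1 / 4)) := Real.rpow_pos_of_pos hM0 _
  have hB0 : (0:ℝ) < B := by rw [hB]; positivity
  have hnv0 : 0 ≤ nv := by rw [hnv]; exact Real.sqrt_nonneg _
  have hwnn : ∀ l : ℤ, (0:ℝ) ≤ wt l ^ (2 * -((m:ℝ)*α)) * ‖v l‖ ^ 2 := by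
    intro l
    apply mul_nonneg (Real.rpow_nonneg _ _) (sq_nonneg _)
    rw [wt]; positivity
  have hnvsq : nv ^ 2 = ∑' l : ℤ, wt l ^ (2 * -((m:ℝ)*α)) * ‖v l‖ ^ 2 := by
    rw [hnv]
    unfold hsNorm
    exact Real.sq_sqrt (tsum_nonneg hwnn)
  -- the two-variable sum, in (l, k) coordinates
  set G : ℤ × ℤ → ℝ :=
    fun q => ‖v q.1‖ ^ 2 * (diagAbs m lam q.2 * diagAbs m lam (q.2 - q.1))⁻¹ with hG
  have hG0 : ∀ q, 0 ≤ G q := by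
    intro q
    apply mul_nonneg (sq_nonneg _)
    exact inv_nonneg.mpr (mul_pos (hdpos q.2) (hdpos (q.2 - q.1))).le
  have hGrow_s : ∀ l : ℤ, Summable (fun k : ℤ => G (l, k)) := by
    intro l
    exact (((keyl l).1).mul_left (‖v l‖^2)).congr (fun k => rfl)
  have hGrow_b : ∀ l : ℤ, ∑' k : ℤ, G (l, k) ≤ (wt l ^ (2 * -((m:ℝ)*α)) * ‖v l‖ ^ 2) * B := by
    intro l
    rw [hG]
    dsimp only
    rw [tsum_mul_left]
    calc ‖v l‖^2 * ∑' k : ℤ, (diagAbs m lam k * diagAbs m lam (k - l))⁻¹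
        ≤ ‖v l‖^2 * (wt l ^ (2 * -((m:ℝ)*α)) * B) := by
          apply mul_le_mul_of_nonneg_left _ (sq_nonneg _)
          rw [hB]
          exact (keyl l).2
      _ = (wt l ^ (2 * -((m:ℝ)*α)) * ‖v l‖ ^ 2) * B := by ring
  have hGcol_s : Summable (fun l : ℤ => ∑' k : ℤ, G (l, k)) := by
    apply Summable.of_nonneg_of_le
      (fun l => tsum_nonneg (fun k => hG0 (l, k))) hGrow_b
    exact hv.mul_right B
  have hG_s : Summable G := (summable_prod_of_nonneg hG0).mpr ⟨hGrow_s, hGcol_s⟩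
  have hG_b : ∑' q : ℤ × ℤ, G q ≤ nv ^ 2 * B := by
    rw [Summable.tsum_prod' hG_s hGrow_s, hnvsq, ← tsum_mul_right]
    exact Summable.tsum_le_tsum hGrow_b hGcol_s (hv.mul_right B)
  -- transfer to (k, j) coordinates
  set e : ℤ × ℤ ≃ ℤ × ℤ :=
    { toFun := fun q => (q.2, q.2 - q.1)
      invFun := fun p => (p.1 - p.2, p.1)
      left_inv := by intro q; simp
      right_inv := by intro p; simp } with he
  set f : ℤ × ℤ → ℝ :=
    fun p => ‖v (p.1 - p.2)‖ ^ 2 / (diagAbs m lam p.1 * diagAbs m lam p.2) with hf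
  have hfe : ∀ q, f (e q) = G q := by
    intro q
    rw [hf, hG, he]
    simp only [Equiv.coe_fn_mk]
    rw [sub_sub_cancel, div_eq_mul_inv]
  have hf_s : Summable f := by
    apply e.summable_iff.mp
    exact (hG_s.congr (fun q => (hfe q).symm))
  have hf_t : ∑' p : ℤ × ℤ, f p = ∑' q : ℤ × ℤ, G q := by
    rw [← e.tsum_eq f]
    exact tsum_congr hfe
  set cst : ℝ := 2 ^ (2 * m + 1) * nv * M ^ (-((1 - α) / 2 + 1 / 4)) with hcst
  have hc0 : 0 ≤ cst := by rw [hcst]; positivity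
  have hcsq : cst ^ 2 = nv ^ 2 * B := by rw [hcst, hB]; ring
  have hfc : ∑' p : ℤ × ℤ, f p ≤ cst ^ 2 := by
    rw [hf_t, hcsq]; exact hG_b
  constructor
  · calc Real.sqrt (∑' p : ℤ × ℤ, f p) ≤ Real.sqrt (cst ^ 2) := Real.sqrt_le_sqrt hfc
      _ = cst := Real.sqrt_sq hc0
  · -- operator bound
    have hsm_eq : ∀ p : ℤ × ℤ, ‖Smat m v lam p.1 p.2‖ ^ 2 = f p := by
      intro p
      rw [hf]
      dsimp only
      unfold Smat
      rw [norm_div, Complex.norm_real, Real.norm_eq_abs,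
        abs_of_nonneg (mul_nonneg (Real.sqrt_nonneg _) (Real.sqrt_nonneg _)),
        div_pow, mul_pow, Real.sq_sqrt (hdpos p.1).le, Real.sq_sqrt (hdpos p.2).le]
    have hsm_s : Summable (fun p : ℤ × ℤ => ‖Smat m v lam p.1 p.2‖ ^ 2) :=
      hf_s.congr (fun p => (hsm_eq p).symm)
    have hsm_b : ∑' p : ℤ × ℤ, ‖Smat m v lam p.1 p.2‖ ^ 2 ≤ cst ^ 2 := by
      rw [tsum_congr hsm_eq]; exact hfc
    exact opOfHS (Smat m v lam) cst hc0 hsm_s hsm_b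
end
end

section
/- Let m ∈ ℕ, 0 ≤ α ≤ 1, and n ∈ ℕ with n ≥ m. Then for every k ∈ ℤ with k ≠ n and k ≠ −n, one has ⟨k⟩^{mα}/|k^{2m} − n^{2m}|^{1/2} ≤ 3^{mα} · n^{m(α−1+1/(2m))}, where ⟨k⟩ := 1+|k|. -/
open scoped BigOperators
noncomputable section
set_option maxHeartbeats 800000


lemma aux_pow (a b : ℝ) (hb : 0 ≤ b) (hba : b ≤ a) (p : ℕ) :
    a ^ p * (a - b) ≤ a ^ (p + 1) - b ^ (p + 1) := by
  have h1 : b ^ p ≤ a ^ p := pow_le_pow_left₀ hb hba p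
  have h2 : b ^ p * b ≤ a ^ p * b := mul_le_mul_of_nonneg_right h1 hb
  rw [pow_succ, pow_succ]; nlinarith

lemma aux_main (m : ℕ) (hm : 0 < m) (t : ℝ) (ht0 : 0 ≤ t) (htm : t ≤ (m : ℝ))
    (n : ℕ) (hn : m ≤ n) (j : ℕ) (hj : j ≠ n) :
    (1 + (j : ℝ)) ^ t / Real.sqrt |(j : ℝ) ^ (2 * m) - (n : ℝ) ^ (2 * m)|
      ≤ 3 ^ t * (n : ℝ) ^ (t - (m : ℝ) + 1 / 2) := by
  have hn1 : 1 ≤ n := hm.trans_le hn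
  have hN1 : (1 : ℝ) ≤ (n : ℝ) := by exact_mod_cast hn1
  have hN0 : (0 : ℝ) < (n : ℝ) := by linarith
  have hJ0 : (0 : ℝ) ≤ (j : ℝ) := Nat.cast_nonneg j
  set N := (n : ℝ) with hNdef
  set J := (j : ℝ) with hJdef
  set D := |J ^ (2 * m) - N ^ (2 * m)| with hDdef
  have hD0 : 0 < D := by
    rw [hDdef, abs_pos, sub_ne_zero]
    intro h
    apply hj
    have h' : (j : ℕ) ^ (2 * m) = n ^ (2 * m) := by
      rw [hJdef, hNdef] at h; exact_mod_cast h
    exact Nat.pow_left_injective (by omega) h'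
  have hsD : 0 < Real.sqrt D := Real.sqrt_pos.mpr hD0
  rw [div_le_iff₀ hsD]
  have h2m : 2 * m - 1 + 1 = 2 * m := by omega
  rcases lt_or_ge j (3 * n) with hcase | hcase
  · -- Case A : j ≤ 3n - 1
    have hwt : 1 + J ≤ 3 * N := by
      have : (j : ℝ) + 1 ≤ 3 * (n : ℝ) := by exact_mod_cast hcase
      linarith
    have hDlow : N ^ (2 * m - 1) ≤ D := by
      have hNp : (0 : ℝ) ≤ N ^ (2 * m - 1) := by positivity
      rcases lt_or_gt_of_ne hj with h | h
      · have hJN : J + 1 ≤ N := by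
          rw [hJdef, hNdef]; exact_mod_cast Nat.succ_le_of_lt h
        have key := aux_pow N J hJ0 (by linarith) (2 * m - 1)
        rw [h2m] at key
        have habs : D = N ^ (2 * m) - J ^ (2 * m) := by
          rw [hDdef, abs_sub_comm, abs_of_nonneg]
          have := pow_le_pow_left₀ hJ0 (show J ≤ N by linarith) (2 * m)
          linarith
        rw [habs]
        nlinarith
      · have hNJ : N + 1 ≤ J := by
          rw [hJdef, hNdef]; exact_mod_cast Nat.succ_le_of_lt h
        have key := aux_pow J N hN0.le (by linarith) (2 * m - 1)
        rw [h2m] at key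
        have habs : D = J ^ (2 * m) - N ^ (2 * m) := by
          rw [hDdef, abs_of_nonneg]
          have := pow_le_pow_left₀ hN0.le (show N ≤ J by linarith) (2 * m)
          linarith
        have hpow : N ^ (2 * m - 1) ≤ J ^ (2 * m - 1) :=
          pow_le_pow_left₀ hN0.le (by linarith) _
        rw [habs]
        nlinarith
    have hsq : N ^ ((m : ℝ) - 1 / 2) ≤ Real.sqrt D := by
      have e1 : Real.sqrt (N ^ (2 * m - 1)) = N ^ ((m : ℝ) - 1 / 2) := by
        rw [← Real.rpow_natCast N (2 * m - 1), Real.sqrt_eq_rpow,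
          ← Real.rpow_mul hN0.le]
        congr 1
        have : ((2 * m - 1 : ℕ) : ℝ) = 2 * (m : ℝ) - 1 := by
          push_cast [Nat.cast_sub (show 1 ≤ 2 * m by omega)]; ring
        rw [this]; ring
      calc N ^ ((m : ℝ) - 1 / 2) = Real.sqrt (N ^ (2 * m - 1)) := e1.symm
        _ ≤ Real.sqrt D := Real.sqrt_le_sqrt hDlow
    calc (1 + J) ^ t ≤ (3 * N) ^ t :=
          Real.rpow_le_rpow (by linarith) hwt ht0
      _ = 3 ^ t * N ^ t := Real.mul_rpow (by norm_num) hN0.le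
      _ = 3 ^ t * (N ^ (t - (m : ℝ) + 1 / 2) * N ^ ((m : ℝ) - 1 / 2)) := by
          rw [← Real.rpow_add hN0]; ring_nf
      _ ≤ 3 ^ t * (N ^ (t - (m : ℝ) + 1 / 2) * Real.sqrt D) := by
          have h3 : (0:ℝ) ≤ (3:ℝ) ^ t := (Real.rpow_pos_of_pos (by norm_num) t).le
          have h4 : (0:ℝ) ≤ N ^ (t - (m : ℝ) + 1 / 2) := (Real.rpow_pos_of_pos hN0 _).le
          have := mul_le_mul_of_nonneg_left hsq h4
          nlinarith
      _ = 3 ^ t * N ^ (t - (m : ℝ) + 1 / 2) * Real.sqrt D := by ring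
  · -- Case B : 3n ≤ j
    have hJN : 3 * N ≤ J := by
      rw [hJdef, hNdef]; exact_mod_cast hcase
    have hJ1 : (1 : ℝ) ≤ J := by linarith
    have hNJ : N ≤ J := by linarith
    have habs : D = J ^ (2 * m) - N ^ (2 * m) := by
      rw [hDdef, abs_of_nonneg]
      have := pow_le_pow_left₀ hN0.le hNJ (2 * m)
      linarith
    have hJm : (0:ℝ) < J ^ m := by positivity
    have hDlow : (2 / 3) * J ^ (2 * m) ≤ D := by
      have key := aux_pow J N hN0.le hNJ (2 * m - 1)
      rw [h2m] at key
      have hpowJ : J ^ (2 * m - 1) * J = J ^ (2 * m) := by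
        rw [← pow_succ, h2m]
      have hJp : (0:ℝ) ≤ J ^ (2 * m - 1) := by positivity
      rw [habs]
      nlinarith
    have hsq : Real.sqrt (2 / 3) * J ^ m ≤ Real.sqrt D := by
      have e1 : Real.sqrt ((2 / 3) * J ^ (2 * m)) = Real.sqrt (2 / 3) * J ^ m := by
        rw [Real.sqrt_mul (by norm_num)]
        congr 1
        rw [show J ^ (2 * m) = (J ^ m) ^ 2 by ring]
        exact Real.sqrt_sq hJm.le
      rw [← e1]
      exact Real.sqrt_le_sqrt hDlow
    -- key numeric inequality
    have hkey : (2 : ℝ) ^ t ≤ Real.sqrt (2 / 3) * 3 ^ (m : ℝ) := by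
      have h1 : (2 : ℝ) ^ t ≤ (2 : ℝ) ^ (m : ℝ) :=
        Real.rpow_le_rpow_of_exponent_le one_le_two htm
      have h2 : (2 : ℝ) ^ (m : ℝ) = (2 : ℝ) ^ (m : ℕ) := Real.rpow_natCast 2 m
      have h3 : ((2 : ℝ) / 3) ^ (m : ℕ) ≤ (2 : ℝ) / 3 := by
        calc ((2 : ℝ) / 3) ^ (m : ℕ) ≤ ((2 : ℝ) / 3) ^ (1 : ℕ) :=
              pow_le_pow_of_le_one (by norm_num) (by norm_num) hm
          _ = 2 / 3 := pow_one _
      have h4 : (2 : ℝ) / 3 ≤ Real.sqrt (2 / 3) := by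
        have hh := Real.sqrt_le_sqrt (show ((2:ℝ)/3)^2 ≤ 2/3 by norm_num)
        rwa [Real.sqrt_sq (by norm_num : (0:ℝ) ≤ 2/3)] at hh
      have h5 : (2 : ℝ) ^ (m : ℕ) ≤ (2 / 3) * 3 ^ (m : ℕ) := by
        have e : ((2 : ℝ) / 3) ^ (m : ℕ) * 3 ^ (m : ℕ) = 2 ^ (m : ℕ) := by
          rw [← mul_pow]; norm_num
        have h3p : (0:ℝ) ≤ (3:ℝ) ^ (m : ℕ) := by positivity
        nlinarith
      have h6 : ((3 : ℝ)) ^ (m : ℝ) = (3 : ℝ) ^ (m : ℕ) := Real.rpow_natCast 3 m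
      have h3p : (0:ℝ) ≤ (3:ℝ) ^ (m : ℕ) := by positivity
      rw [h6]
      nlinarith
    have h2t : (0:ℝ) < (2:ℝ) ^ t := Real.rpow_pos_of_pos (by norm_num) t
    have h3t : (0:ℝ) < (3:ℝ) ^ t := Real.rpow_pos_of_pos (by norm_num) t
    have h3m : (0:ℝ) < (3:ℝ) ^ (m : ℝ) := Real.rpow_pos_of_pos (by norm_num) _
    have hNtm : (0:ℝ) < N ^ (t - (m : ℝ)) := Real.rpow_pos_of_pos hN0 _
    have hstep1 : (1 + J) ^ t ≤ 2 ^ t * (3 ^ (t - (m : ℝ)) * N ^ (t - (m : ℝ))) * J ^ m := by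
      calc (1 + J) ^ t ≤ (2 * J) ^ t :=
            Real.rpow_le_rpow (by linarith) (by linarith) ht0
        _ = 2 ^ t * J ^ t := Real.mul_rpow (by norm_num) (by linarith)
        _ = 2 ^ t * (J ^ (t - (m : ℝ)) * J ^ ((m : ℝ))) := by
            rw [← Real.rpow_add (by linarith : (0:ℝ) < J)]; ring_nf
        _ ≤ 2 ^ t * ((3 * N) ^ (t - (m : ℝ)) * J ^ ((m : ℝ))) := by
            have ha : J ^ (t - (m : ℝ)) ≤ (3 * N) ^ (t - (m : ℝ)) :=
              Real.rpow_le_rpow_of_nonpos (by linarith) hJN (by linarith)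
            have hb : (0:ℝ) ≤ J ^ ((m : ℝ)) := (Real.rpow_pos_of_pos (by linarith) _).le
            exact mul_le_mul_of_nonneg_left (mul_le_mul_of_nonneg_right ha hb) h2t.le
        _ = 2 ^ t * ((3 ^ (t - (m : ℝ)) * N ^ (t - (m : ℝ))) * J ^ ((m : ℝ))) := by
            rw [Real.mul_rpow (by norm_num) hN0.le]
        _ = 2 ^ t * (3 ^ (t - (m : ℝ)) * N ^ (t - (m : ℝ))) * J ^ m := by
            rw [Real.rpow_natCast]; ring
    have hstep2 : 2 ^ t * 3 ^ (t - (m : ℝ)) ≤ 3 ^ t * Real.sqrt (2 / 3) := by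
      have e : (3:ℝ) ^ (t - (m : ℝ)) = 3 ^ t / 3 ^ (m : ℝ) :=
        Real.rpow_sub (by norm_num) t _
      rw [e, mul_div_assoc', div_le_iff₀ h3m, mul_comm ((3:ℝ)^t) (Real.sqrt (2/3))]
      calc (2:ℝ) ^ t * 3 ^ t ≤ (Real.sqrt (2/3) * 3 ^ (m:ℝ)) * 3 ^ t := by nlinarith
        _ = Real.sqrt (2 / 3) * 3 ^ t * 3 ^ (m : ℝ) := by ring
    have hsqrt23 : (0:ℝ) < Real.sqrt (2/3) := Real.sqrt_pos.mpr (by norm_num)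
    have hNhalf : (1:ℝ) ≤ N ^ ((1:ℝ)/2) := Real.one_le_rpow hN1 (by norm_num)
    have hfinal : 2 ^ t * (3 ^ (t - (m : ℝ)) * N ^ (t - (m : ℝ))) * J ^ m
        ≤ 3 ^ t * N ^ (t - (m : ℝ) + 1 / 2) * Real.sqrt D := by
      have eN : N ^ (t - (m : ℝ) + 1 / 2) = N ^ (t - (m : ℝ)) * N ^ ((1:ℝ)/2) := by
        rw [← Real.rpow_add hN0]
      have hA : 2 ^ t * (3 ^ (t - (m : ℝ)) * N ^ (t - (m : ℝ))) * J ^ m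
          ≤ 3 ^ t * Real.sqrt (2/3) * N ^ (t - (m : ℝ)) * J ^ m := by
        nlinarith [mul_le_mul_of_nonneg_right hstep2 (le_of_lt hNtm), hJm.le,
          mul_le_mul_of_nonneg_right
            (mul_le_mul_of_nonneg_right hstep2 (le_of_lt hNtm)) hJm.le]
      have hB : 3 ^ t * Real.sqrt (2/3) * N ^ (t - (m : ℝ)) * J ^ m
          ≤ 3 ^ t * N ^ (t - (m : ℝ) + 1 / 2) * Real.sqrt D := by
        rw [eN]
        have h1 : Real.sqrt (2/3) * J ^ m ≤ N ^ ((1:ℝ)/2) * Real.sqrt D := by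
          have := mul_le_mul hNhalf hsq (by positivity) (by positivity)
          calc Real.sqrt (2/3) * J ^ m = 1 * (Real.sqrt (2/3) * J ^ m) := by ring
            _ ≤ N ^ ((1:ℝ)/2) * Real.sqrt D := this
        calc 3 ^ t * Real.sqrt (2/3) * N ^ (t - (m : ℝ)) * J ^ m
            = (3 ^ t * N ^ (t - (m : ℝ))) * (Real.sqrt (2/3) * J ^ m) := by ring
          _ ≤ (3 ^ t * N ^ (t - (m : ℝ))) * (N ^ ((1:ℝ)/2) * Real.sqrt D) := by
              have hp : (0:ℝ) ≤ 3 ^ t * N ^ (t - (m : ℝ)) := by positivity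
              exact mul_le_mul_of_nonneg_left h1 hp
          _ = 3 ^ t * (N ^ (t - (m : ℝ)) * N ^ ((1:ℝ)/2)) * Real.sqrt D := by ring
      exact hA.trans hB
    exact hstep1.trans hfinal


theorem statement5 (m : ℕ) (hm : 0 < m) (α : ℝ) (hα0 : 0 ≤ α) (hα1 : α ≤ 1)
    (n : ℕ) (hn : m ≤ n) :
    ∀ k : ℤ, k ≠ (n : ℤ) → k ≠ -(n : ℤ) →
      wt k ^ ((m : ℝ) * α) / Real.sqrt |(k : ℝ) ^ (2 * m) - (n : ℝ) ^ (2 * m)|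
        ≤ (3 : ℝ) ^ ((m : ℝ) * α) * (n : ℝ) ^ ((m : ℝ) * (α - 1 + 1 / (2 * (m : ℝ)))) := by
  intro k hk1 hk2
  have hj : k.natAbs ≠ n := by
    intro h
    rcases Int.natAbs_eq k with he | he <;> omega
  have hwt : wt k = 1 + (k.natAbs : ℝ) := by
    unfold wt; rw [Nat.cast_natAbs]; push_cast; ring
  have hpow : (k : ℝ) ^ (2 * m) = ((k.natAbs : ℝ)) ^ (2 * m) := by
    rw [Nat.cast_natAbs, Int.cast_abs, Even.pow_abs (even_two_mul m)]
  have hexp : (m : ℝ) * (α - 1 + 1 / (2 * (m : ℝ))) = (m : ℝ) * α - (m : ℝ) + 1 / 2 := by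
    have hm0 : (m : ℝ) ≠ 0 := Nat.cast_ne_zero.mpr hm.ne'
    field_simp
  rw [hwt, hpow, hexp]
  have htm : (m : ℝ) * α ≤ (m : ℝ) := by
    nlinarith [Nat.cast_nonneg (α := ℝ) m]
  exact aux_main m hm ((m : ℝ) * α) (by positivity) htm n hn k.natAbs hj
end
end

section
/- Let m ∈ ℕ, 0 ≤ α ≤ 1, and n ∈ ℕ with n ≥ m. Then for every k ∈ ℤ with k ≠ n and k ≠ −n, and for either choice of sign, one has ⟨k ± n⟩^{mα}/|k^{2m} − n^{2m}|^{1/2} ≤ 4^{mα} · n^{m(α−1+1/(2m))}, where ⟨k⟩ := 1+|k|. -/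
open scoped BigOperators
noncomputable section

lemma aux_bounds (m : ℕ) (hm : 0 < m) (x ν w : ℝ) (hν : 1 ≤ ν) (hx : 0 ≤ x)
    (hw1 : 1 ≤ w) (hw : w ≤ 1 + x + ν) (hcase : x ≤ ν - 1 ∨ ν + 1 ≤ x) :
    ν ^ (2*m-1) ≤ |x ^ (2*m) - ν ^ (2*m)| ∧
      w ^ (2*m) ≤ 16 ^ m * ν * |x ^ (2*m) - ν ^ (2*m)| := by
  have hν0 : (0:ℝ) < ν := lt_of_lt_of_le one_pos hν
  obtain ⟨e, he⟩ : ∃ e, 2*m = e + 1 := ⟨2*m-1, by omega⟩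
  have he' : 2*m - 1 = e := by omega
  rw [he', he]
  rcases hcase with h | h
  · -- x ≤ ν - 1
    have hxν : x ≤ ν := by linarith
    have hpe : x ^ e ≤ ν ^ e := pow_le_pow_left₀ hx hxν e
    have hxx : x ^ (e+1) + ν ^ e ≤ ν ^ (e+1) := by
      calc x ^ (e+1) + ν ^ e = x * x ^ e + ν ^ e := by ring
        _ ≤ (ν-1) * ν ^ e + ν ^ e := by
            have : x * x ^ e ≤ (ν-1) * ν ^ e :=
              mul_le_mul h hpe (pow_nonneg hx e) (by linarith)
            linarith
        _ = ν ^ (e+1) := by ring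
    have hple : x ^ (e+1) ≤ ν ^ (e+1) := by
      have := pow_nonneg hν0.le e; linarith
    have habs : |x ^ (e+1) - ν ^ (e+1)| = ν ^ (e+1) - x ^ (e+1) := by
      rw [abs_sub_comm, abs_of_nonneg (by linarith)]
    rw [habs]
    have hA1 : ν ^ e ≤ ν ^ (e+1) - x ^ (e+1) := by linarith
    refine ⟨hA1, ?_⟩
    have hw2 : w ≤ 2 * ν := by linarith
    have h2 : (2:ℝ)^(e+1) ≤ 16^m := by
      calc (2:ℝ)^(e+1) = 4^m := by rw [← he, pow_mul]; norm_num
        _ ≤ 16^m := pow_le_pow_left₀ (by norm_num) (by norm_num) m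
    calc w ^ (e+1) ≤ (2*ν) ^ (e+1) := pow_le_pow_left₀ (by linarith) hw2 _
      _ = 2^(e+1) * ν^(e+1) := mul_pow 2 ν (e+1)
      _ ≤ 16^m * ν^(e+1) :=
          mul_le_mul_of_nonneg_right h2 (pow_nonneg hν0.le _)
      _ = 16^m * (ν * ν^e) := by ring
      _ ≤ 16^m * (ν * (ν ^ (e+1) - x ^ (e+1))) := by
          have := mul_le_mul_of_nonneg_left hA1 hν0.le
          have h16 : (0:ℝ) ≤ 16^m := by positivity
          nlinarith
      _ = 16^m * ν * (ν ^ (e+1) - x ^ (e+1)) := by ring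
  · -- ν + 1 ≤ x
    have hνx : ν ≤ x := by linarith
    have hpe : ν ^ e ≤ x ^ e := pow_le_pow_left₀ hν0.le hνx e
    have hA : (x - ν) * x ^ e ≤ x ^ (e+1) - ν ^ (e+1) := by
      have h1 : ν * ν ^ e ≤ ν * x ^ e := mul_le_mul_of_nonneg_left hpe hν0.le
      calc (x - ν) * x ^ e = x * x ^ e - ν * x ^ e := by ring
        _ ≤ x * x ^ e - ν * ν ^ e := by linarith
        _ = x ^ (e+1) - ν ^ (e+1) := by ring
    have hνe : ν ^ e ≤ (x - ν) * x ^ e := by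
      have : (1:ℝ) * ν ^ e ≤ (x - ν) * x ^ e :=
        mul_le_mul (by linarith) hpe (pow_nonneg hν0.le e) (by linarith)
      linarith
    have hple : ν ^ (e+1) ≤ x ^ (e+1) := pow_le_pow_left₀ hν0.le hνx _
    have habs : |x ^ (e+1) - ν ^ (e+1)| = x ^ (e+1) - ν ^ (e+1) :=
      abs_of_nonneg (by linarith)
    rw [habs]
    refine ⟨by linarith, ?_⟩
    have hw2 : w ≤ 2 * x := by linarith
    have hx4 : x ≤ 2 * (ν * (x - ν)) := by
      have t1 : ν ≤ ν * (x - ν) := le_mul_of_one_le_right hν0.le (by linarith)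
      have t2 : x - ν ≤ ν * (x - ν) := le_mul_of_one_le_left (by linarith) hν
      linarith
    have h2 : (2:ℝ)^(e+2) ≤ 16^m := by
      calc (2:ℝ)^(e+2) ≤ 2^(4*m) := pow_le_pow_right₀ one_le_two (by omega)
        _ = 16^m := by rw [show (16:ℝ) = 2^4 by norm_num, ← pow_mul]
    have hxe : (0:ℝ) ≤ x ^ e := pow_nonneg hx e
    calc w ^ (e+1) ≤ (2*x) ^ (e+1) := pow_le_pow_left₀ (by linarith) hw2 _
      _ = 2^(e+1) * (x * x^e) := by rw [mul_pow]; ring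
      _ ≤ 2^(e+1) * ((2 * (ν * (x-ν))) * x^e) := by
          have hp : (0:ℝ) ≤ (2:ℝ)^(e+1) := by positivity
          have : x * x^e ≤ (2 * (ν * (x-ν))) * x^e :=
            mul_le_mul_of_nonneg_right hx4 hxe
          nlinarith
      _ = 2^(e+2) * (ν * ((x-ν) * x^e)) := by ring
      _ ≤ 16^m * (ν * ((x-ν) * x^e)) := by
          have hnn : (0:ℝ) ≤ ν * ((x-ν) * x^e) := by
            have : (0:ℝ) ≤ (x-ν) * x^e := mul_nonneg (by linarith) hxe
            positivity
          exact mul_le_mul_of_nonneg_right h2 hnn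
      _ ≤ 16^m * (ν * (x ^ (e+1) - ν ^ (e+1))) := by
          have h16 : (0:ℝ) ≤ 16^m := by positivity
          exact mul_le_mul_of_nonneg_left
            (mul_le_mul_of_nonneg_left hA hν0.le) h16
      _ = 16^m * ν * (x ^ (e+1) - ν ^ (e+1)) := by ring

lemma aux_rpow (m : ℕ) (hm : 0 < m) (β : ℝ) (hβ0 : 0 ≤ β) (hβm : β ≤ (m:ℝ))
    (ν w A : ℝ) (hν : 1 ≤ ν) (hw1 : 1 ≤ w)
    (hA1 : ν ^ (2*m-1) ≤ A) (hA2 : w ^ (2*m) ≤ 16 ^ m * ν * A) :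
    w ^ β / Real.sqrt A ≤ 4 ^ β * ν ^ (β - (m:ℝ) + 1/2) := by
  have hν0 : (0:ℝ) < ν := lt_of_lt_of_le one_pos hν
  have hP0 : (0:ℝ) < ν ^ (2*m-1) := pow_pos hν0 _
  have hA0 : (0:ℝ) < A := lt_of_lt_of_le hP0 hA1
  have hsA : (0:ℝ) < Real.sqrt A := Real.sqrt_pos.2 hA0
  have hw0 : (0:ℝ) < w := lt_of_lt_of_le one_pos hw1
  set D : ℝ := A / ν ^ (2*m-1) with hD
  have hD1 : (1:ℝ) ≤ D := (one_le_div hP0).2 hA1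
  have hD0 : (0:ℝ) ≤ D := by linarith
  have hsD : (1:ℝ) ≤ Real.sqrt D := by
    nlinarith [Real.sq_sqrt hD0, Real.sqrt_nonneg D]
  -- square root of ν ^ (2m-1) as rpow
  have hc : ((2*m-1:ℕ):ℝ) = 2*(m:ℝ) - 1 := by
    have h1 : (1:ℕ) ≤ 2*m := by omega
    rw [Nat.cast_sub h1]; push_cast; ring
  have hsq : Real.sqrt (ν ^ (2*m-1)) = ν ^ ((m:ℝ) - 1/2) := by
    rw [← Real.rpow_natCast ν (2*m-1), hc, Real.sqrt_eq_rpow,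
      ← Real.rpow_mul hν0.le]
    congr 1; ring
  -- key bound
  have key : w ^ β ≤ (4*ν) ^ β * Real.sqrt D := by
    rcases le_or_gt w (4*ν) with h4 | h4
    · have h1 : w ^ β ≤ (4*ν) ^ β := Real.rpow_le_rpow hw0.le h4 hβ0
      have h2 : (0:ℝ) ≤ (4*ν) ^ β := Real.rpow_nonneg (by linarith) β
      nlinarith
    · set X : ℝ := w / (4*ν) with hX
      have hX1 : (1:ℝ) ≤ X := by
        rw [hX, le_div_iff₀ (by linarith)]; linarith
      have hX0 : (0:ℝ) < X := by linarith
      have hXpow : X ^ (2*m) ≤ D := by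
        have h1 : (4*ν)^(2*m) = 16^m * ν^(2*m) := by
          rw [mul_pow]; congr 1
          rw [show (16:ℝ) = 4^2 by norm_num, ← pow_mul]
        have h2 : ν^(2*m) = ν * ν^(2*m-1) := by
          conv_lhs => rw [show 2*m = (2*m-1)+1 by omega]
          rw [pow_succ']
        rw [hX, div_pow, h1, h2, hD, div_le_div_iff₀ (by positivity) hP0]
        calc w^(2*m) * ν^(2*m-1) ≤ (16^m * ν * A) * ν^(2*m-1) :=
              mul_le_mul_of_nonneg_right hA2 (pow_nonneg hν0.le _)
          _ = A * (16^m * (ν * ν^(2*m-1))) := by ring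
      have hXβ : X ^ β ≤ Real.sqrt D := by
        calc X ^ β ≤ X ^ ((m:ℝ)) := Real.rpow_le_rpow_of_exponent_le hX1 hβm
          _ = X ^ m := Real.rpow_natCast X m
          _ = Real.sqrt (X ^ (2*m)) := by
              rw [show 2*m = m*2 by ring, pow_mul, Real.sqrt_sq (pow_nonneg hX0.le m)]
          _ ≤ Real.sqrt D := Real.sqrt_le_sqrt hXpow
      have hw4ν : w = (4*ν) * X := by
        rw [hX]; field_simp
      calc w ^ β = ((4*ν) * X) ^ β := by rw [← hw4ν]
        _ = (4*ν)^β * X^β := Real.mul_rpow (by linarith) hX0.le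
        _ ≤ (4*ν)^β * Real.sqrt D :=
            mul_le_mul_of_nonneg_left hXβ (Real.rpow_nonneg (by linarith) β)
  -- assemble
  rw [div_le_iff₀ hsA]
  have hrw : (4:ℝ) ^ β * ν ^ (β - (m:ℝ) + 1/2) * Real.sqrt A
      = (4*ν) ^ β * Real.sqrt D := by
    rw [hD, Real.sqrt_div hA0.le, hsq,
      Real.mul_rpow (by norm_num : (0:ℝ) ≤ 4) hν0.le]
    have hne : ν ^ ((m:ℝ) - 1/2) ≠ 0 := (Real.rpow_pos_of_pos hν0 _).ne'
    have hsplit : ν ^ (β - (m:ℝ) + 1/2) = ν ^ β / ν ^ ((m:ℝ) - 1/2) := by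
      rw [← Real.rpow_sub hν0]; ring_nf
    rw [hsplit]; field_simp
  rw [hrw]; exact key

theorem statement6 (m : ℕ) (hm : 0 < m) (α : ℝ) (hα0 : 0 ≤ α) (hα1 : α ≤ 1)
    (n : ℕ) (hn : m ≤ n) :
    ∀ k : ℤ, k ≠ (n : ℤ) → k ≠ -(n : ℤ) →
      wt (k + (n : ℤ)) ^ ((m : ℝ) * α) / Real.sqrt |(k : ℝ) ^ (2 * m) - (n : ℝ) ^ (2 * m)|
        ≤ (4 : ℝ) ^ ((m : ℝ) * α) * (n : ℝ) ^ ((m : ℝ) * (α - 1 + 1 / (2 * (m : ℝ)))) ∧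
      wt (k - (n : ℤ)) ^ ((m : ℝ) * α) / Real.sqrt |(k : ℝ) ^ (2 * m) - (n : ℝ) ^ (2 * m)|
        ≤ (4 : ℝ) ^ ((m : ℝ) * α) * (n : ℝ) ^ ((m : ℝ) * (α - 1 + 1 / (2 * (m : ℝ)))) := by
  intro k hk1 hk2
  have hn1 : 1 ≤ n := le_trans hm hn
  have hν1 : (1:ℝ) ≤ (n:ℝ) := by exact_mod_cast hn1
  have hν0 : (0:ℝ) < (n:ℝ) := by linarith
  have hm0 : (m:ℝ) ≠ 0 := Nat.cast_ne_zero.2 (by omega)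
  have hexp : (m:ℝ) * (α - 1 + 1 / (2 * (m:ℝ))) = (m:ℝ) * α - (m:ℝ) + 1/2 := by
    field_simp
  rw [hexp]
  have hβ0 : 0 ≤ (m:ℝ) * α := mul_nonneg (Nat.cast_nonneg m) hα0
  have hβm : (m:ℝ) * α ≤ (m:ℝ) := by nlinarith [Nat.cast_nonneg (α := ℝ) m]
  set x : ℝ := |(k:ℝ)| with hxdef
  have hx0 : 0 ≤ x := abs_nonneg _
  have hpow : (k:ℝ)^(2*m) = x^(2*m) := by rw [pow_mul, pow_mul, sq_abs]
  have hxe : x = ((k.natAbs : ℤ) : ℝ) := by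
    rw [hxdef, ← Int.abs_eq_natAbs, Int.cast_abs]
  have hcase : x ≤ (n:ℝ) - 1 ∨ (n:ℝ) + 1 ≤ x := by
    have h1 : (k.natAbs : ℤ) ≤ (n:ℤ) - 1 ∨ (n:ℤ) + 1 ≤ (k.natAbs : ℤ) := by omega
    rcases h1 with h1 | h1
    · left; rw [hxe]; exact_mod_cast h1
    · right; rw [hxe]; exact_mod_cast h1
  have habs : ∀ j : ℤ, wt (k + j) ≤ 1 + x + |(j:ℝ)| := by
    intro j
    have : |((k + j : ℤ):ℝ)| ≤ x + |(j:ℝ)| := by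
      push_cast; exact abs_add_le _ _
    unfold wt; linarith
  have hwt1 : ∀ j : ℤ, 1 ≤ wt j := fun j => le_add_of_nonneg_right (abs_nonneg _)
  rw [hpow]
  constructor
  · have hw : wt (k + (n:ℤ)) ≤ 1 + x + (n:ℝ) := by
      have := habs (n:ℤ)
      rwa [abs_of_nonneg (by exact_mod_cast Nat.cast_nonneg n : (0:ℝ) ≤ ((n:ℤ):ℝ)),
        Int.cast_natCast] at this
    obtain ⟨hA1, hA2⟩ := aux_bounds m hm x (n:ℝ) (wt (k + n)) hν1 hx0 (hwt1 _) hw hcase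
    exact aux_rpow m hm ((m:ℝ)*α) hβ0 hβm (n:ℝ) (wt (k+n)) _ hν1 (hwt1 _) hA1 hA2
  · have hw : wt (k - (n:ℤ)) ≤ 1 + x + (n:ℝ) := by
      have := habs (-(n:ℤ))
      rw [show k + -(n:ℤ) = k - (n:ℤ) by ring] at this
      have h2 : |((-(n:ℤ) : ℤ):ℝ)| = (n:ℝ) := by
        push_cast; rw [abs_neg, abs_of_nonneg hν0.le]
      rwa [h2] at this
    obtain ⟨hA1, hA2⟩ := aux_bounds m hm x (n:ℝ) (wt (k - n)) hν1 hx0 (hwt1 _) hw hcase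
    exact aux_rpow m hm ((m:ℝ)*α) hβ0 hβm (n:ℝ) (wt (k-n)) _ hν1 (hwt1 _) hA1 hA2
end
end

section
/- Let m ∈ ℕ, n ∈ ℕ with n ≥ (8m−4)m/(8m−7), and 0 < r < n^m π^{2m}. Then for every λ ∈ Vert^m_n(r) and every k ∈ ℤ with k ≠ ±n, one has 1/|λ − k^{2m}π^{2m}| ≤ 3/(π^{2m}·|k^{2m} − n^{2m}|). -/
open scoped BigOperators
noncomputable section

lemma statement8_key (A B : ℝ) (hA : 3 ≤ A) (hAB : B + 1 ≤ A) (hB : 0 ≤ B) :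
    3 / 2 * A ≤ A ^ 2 - B ^ 2 := by
  rcases le_total B (A / 2) with h | h <;> nlinarith

theorem statement8 (m : ℕ) (hm : 0 < m)
    (n : ℕ) (hn : ((8 * (m : ℝ) - 4) * m) / (8 * m - 7) ≤ n)
    (r : ℝ) (hr0 : 0 < r) (hr1 : r < (n : ℝ) ^ m * Real.pi ^ (2 * m)) :
    ∀ lam ∈ VertSet m n r, ∀ k : ℤ, k ≠ (n : ℤ) → k ≠ -(n : ℤ) →
      1 / diagAbs m lam k ≤ 3 / (Real.pi ^ (2 * m) * |(k : ℝ) ^ (2 * m) - (n : ℝ) ^ (2 * m)|) := by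
  intro lam hlam k hk1 hk2
  obtain ⟨h1, _h2⟩ := hlam
  set c : ℝ := Real.pi ^ (2 * m) with hc_def
  have hc : 0 < c := pow_pos Real.pi_pos _
  set j : ℕ := k.natAbs with hj_def
  have hjn : j ≠ n := by
    intro h
    have hkn : ((k.natAbs : ℤ)) = (n : ℤ) := by exact_mod_cast h
    rcases Int.natAbs_eq k with hk | hk
    · exact hk1 (by rw [hk, hkn])
    · exact hk2 (by rw [hk, hkn])
  have hkr : (k : ℝ) ^ (2 * m) = (j : ℝ) ^ (2 * m) := by
    rw [pow_mul, pow_mul, hj_def, Nat.cast_natAbs, Int.cast_abs, sq_abs]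
  -- n ≥ 2
  have hm1 : (1 : ℝ) ≤ (m : ℝ) := by exact_mod_cast hm
  have hn2 : 2 ≤ n := by
    have hden : (0 : ℝ) < 8 * (m : ℝ) - 7 := by nlinarith
    have h1lt : (1 : ℝ) < ((8 * (m : ℝ) - 4) * m) / (8 * m - 7) := by
      rw [lt_div_iff₀ hden]
      nlinarith
    have : (1 : ℝ) < (n : ℝ) := lt_of_lt_of_le h1lt hn
    exact_mod_cast this
  -- n^m ≥ 3
  have hN3 : (3 : ℝ) ≤ (n : ℝ) ^ m := by
    rcases eq_or_lt_of_le (Nat.one_le_iff_ne_zero.mpr hm.ne') with hm1' | hm2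
    · have hm1'' : m = 1 := hm1'.symm
      subst hm1''
      norm_num at hn
      have h3n : 3 ≤ n := by omega
      rw [pow_one]
      exact_mod_cast h3n
    · have : 4 ≤ n ^ m := by
        calc 4 = 2 ^ 2 := by norm_num
        _ ≤ 2 ^ m := Nat.pow_le_pow_right (by norm_num) hm2
        _ ≤ n ^ m := Nat.pow_le_pow_left hn2 m
      exact_mod_cast le_trans (by norm_num : (3:ℕ) ≤ 4) this
  set D : ℝ := |(k : ℝ) ^ (2 * m) - (n : ℝ) ^ (2 * m)| with hD_def
  have hD : 3 / 2 * (n : ℝ) ^ m ≤ D := by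
    have hsq : ∀ a : ℝ, a ^ (2 * m) = (a ^ m) ^ 2 := by
      intro a; rw [mul_comm 2 m, pow_mul]
    rcases lt_or_gt_of_ne hjn with hlt | hgt
    · -- j < n
      have hpow : j ^ m + 1 ≤ n ^ m := Nat.pow_lt_pow_left hlt (by omega)
      have hpowR : ((j : ℝ)) ^ m + 1 ≤ (n : ℝ) ^ m := by exact_mod_cast hpow
      have hkey := statement8_key ((n : ℝ) ^ m) ((j : ℝ) ^ m) hN3 hpowR
        (by positivity)
      have habs : D = (n : ℝ) ^ (2 * m) - (j : ℝ) ^ (2 * m) := by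
        rw [hD_def, hkr, abs_of_nonpos (by nlinarith [hsq (j:ℝ), hsq (n:ℝ)])]
        ring
      rw [habs, hsq, hsq]
      exact hkey
    · -- n < j
      have hpow : n ^ m + 1 ≤ j ^ m := Nat.pow_lt_pow_left hgt (by omega)
      have hpowR : ((n : ℝ)) ^ m + 1 ≤ (j : ℝ) ^ m := by exact_mod_cast hpow
      have hA3 : (3 : ℝ) ≤ (j : ℝ) ^ m := by linarith
      have hkey := statement8_key ((j : ℝ) ^ m) ((n : ℝ) ^ m) hA3 hpowR (by positivity)
      have habs : D = (j : ℝ) ^ (2 * m) - (n : ℝ) ^ (2 * m) := by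
        rw [hD_def, hkr, abs_of_nonneg (by nlinarith [hsq (j:ℝ), hsq (n:ℝ)])]
      rw [habs, hsq, hsq]
      nlinarith
  have hDpos : 0 < D := lt_of_lt_of_le (by positivity) hD
  -- real part identity
  have hsplit : lam - (k : ℂ) ^ (2 * m) * (Real.pi : ℂ) ^ (2 * m)
      = (lam - (n : ℂ) ^ (2 * m) * (Real.pi : ℂ) ^ (2 * m))
        + (((((n : ℝ) ^ (2 * m) - (k : ℝ) ^ (2 * m)) * c) : ℝ) : ℂ) := by
    rw [hc_def]
    push_cast
    ring
  have hre : (lam - (k : ℂ) ^ (2 * m) * (Real.pi : ℂ) ^ (2 * m)).re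
      = (lam - (n : ℂ) ^ (2 * m) * (Real.pi : ℂ) ^ (2 * m)).re
        + ((n : ℝ) ^ (2 * m) - (k : ℝ) ^ (2 * m)) * c := by
    rw [hsplit, Complex.add_re, Complex.ofReal_re]
  -- lower bound on diagAbs
  have hdlow : c * D / 3 ≤ diagAbs m lam k := by
    have habs_re : |(lam - (k : ℂ) ^ (2 * m) * (Real.pi : ℂ) ^ (2 * m)).re|
        ≤ diagAbs m lam k := Complex.abs_re_le_norm _
    have h3 : D * c - (n : ℝ) ^ m * c
        ≤ |(lam - (k : ℂ) ^ (2 * m) * (Real.pi : ℂ) ^ (2 * m)).re| := by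
      rw [hre]
      have h4 : |((n : ℝ) ^ (2 * m) - (k : ℝ) ^ (2 * m)) * c| = D * c := by
        rw [abs_mul, abs_of_pos hc, abs_sub_comm]
      have h6 : |((n : ℝ) ^ (2 * m) - (k : ℝ) ^ (2 * m)) * c|
          - |(lam - (n : ℂ) ^ (2 * m) * (Real.pi : ℂ) ^ (2 * m)).re|
          ≤ |(lam - (n : ℂ) ^ (2 * m) * (Real.pi : ℂ) ^ (2 * m)).re
              + ((n : ℝ) ^ (2 * m) - (k : ℝ) ^ (2 * m)) * c| := by
        have h6' := abs_sub_abs_le_abs_sub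
          (((n : ℝ) ^ (2 * m) - (k : ℝ) ^ (2 * m)) * c)
          (-(lam - (n : ℂ) ^ (2 * m) * (Real.pi : ℂ) ^ (2 * m)).re)
        rw [abs_neg, sub_neg_eq_add] at h6'
        rw [add_comm ((lam - (n : ℂ) ^ (2 * m) * (Real.pi : ℂ) ^ (2 * m)).re)]
        exact h6'
      rw [h4] at h6
      linarith
    have h7 : c * D / 3 ≤ D * c - (n : ℝ) ^ m * c := by
      have : (n : ℝ) ^ m ≤ 2 / 3 * D := by linarith
      nlinarith
    calc c * D / 3 ≤ D * c - (n : ℝ) ^ m * c := h7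
      _ ≤ |(lam - (k : ℂ) ^ (2 * m) * (Real.pi : ℂ) ^ (2 * m)).re| := h3
      _ ≤ diagAbs m lam k := habs_re
  have hd3pos : 0 < c * D / 3 := by positivity
  calc 1 / diagAbs m lam k ≤ 1 / (c * D / 3) :=
        one_div_le_one_div_of_le hd3pos hdlow
    _ = 3 / (c * D) := one_div_div _ _
    _ = 3 / (Real.pi ^ (2 * m) * D) := by rw [hc_def]
end
end

section
/- Let m ∈ ℕ and M ≥ 1. Then for every λ ∈ Ext_M and every k ∈ ℤ, one has |λ − k^{2m}π^{2m}| ≥ (M + k^{2m}π^{2m})·sin(π/4). -/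
open scoped BigOperators
noncomputable section

theorem statement10 (m : ℕ) (hm : 0 < m) (M : ℝ) (hM : 1 ≤ M) :
    ∀ lam ∈ ExtSet M, ∀ k : ℤ,
      (M + (k : ℝ) ^ (2 * m) * Real.pi ^ (2 * m)) * Real.sin (Real.pi / 4)
        ≤ diagAbs m lam k := by
  intro lam hlam k
  set μ : ℝ := (k : ℝ) ^ (2 * m) * Real.pi ^ (2 * m) with hμdef
  have hμ0 : 0 ≤ μ := by
    rw [hμdef, mul_comm 2 m, pow_mul]; positivity
  have hz : lam - (k : ℂ) ^ (2 * m) * (Real.pi : ℂ) ^ (2 * m) = lam - (μ : ℂ) := by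
    push_cast [hμdef]; ring
  rw [diagAbs, hz, Real.sin_pi_div_four]
  set x : ℝ := lam.re - μ with hx
  set b : ℝ := |lam.im| with hb
  have hb0 : 0 ≤ b := abs_nonneg _
  have hb2 : b ^ 2 = lam.im ^ 2 := sq_abs _
  have hineq : M + μ ≤ b - x := by
    have : lam.re ≤ |lam.im| - M := hlam
    simp only [hx, hb]; linarith
  set A : ℝ := ‖lam - (μ : ℂ)‖ with hA
  have hA0 : 0 ≤ A := norm_nonneg _
  have hA2 : A ^ 2 = x ^ 2 + lam.im ^ 2 := by
    rw [hA, Complex.sq_norm, Complex.normSq_apply]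
    simp [hx]
    ring
  have hs2 : Real.sqrt 2 ^ 2 = 2 := Real.sq_sqrt (by norm_num)
  have hs0 : 0 ≤ Real.sqrt 2 := Real.sqrt_nonneg 2
  have h1 : (b - x) ^ 2 ≤ (Real.sqrt 2 * A) ^ 2 := by nlinarith [sq_nonneg (x + b)]
  have h2 : b - x ≤ Real.sqrt 2 * A := by
    nlinarith [h1, mul_nonneg hs0 hA0, hineq, hM, hμ0]
  have h3 : Real.sqrt 2 * (M + μ) ≤ Real.sqrt 2 * (Real.sqrt 2 * A) :=
    mul_le_mul_of_nonneg_left (hineq.trans h2) hs0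
  nlinarith [h3, hs2]
end
end

section
/- Let m ∈ ℕ, 0 ≤ α < 1, and let v ∈ h^{-mα}_0 satisfy v(−k) = conj(v(k)) for all k ∈ ℤ. Then every periodic eigenvalue of v is real, i.e. if λ ∈ ℂ and there exists a nonzero a ∈ h^{m(2−α)} with k^{2m}π^{2m} a(k) + Σ_{j∈ℤ} v(k−j) a(j) = λ a(k) for all k ∈ ℤ, then Im λ = 0. -/
open scoped BigOperators
noncomputable section

lemma wt_pos (k : ℤ) : 0 < wt k := by unfold wt; positivity

lemma one_le_wt (k : ℤ) : 1 ≤ wt k := by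
  unfold wt; have := abs_nonneg ((k : ℝ)); linarith

lemma one_le_wt_rpow (k : ℤ) {r : ℝ} (hr : 0 ≤ r) : 1 ≤ wt k ^ r := by
  rw [show (1 : ℝ) = wt k ^ (0 : ℝ) by simp]
  exact Real.rpow_le_rpow_of_exponent_le (one_le_wt k) hr

lemma wt_sq_rpow (k : ℤ) (r : ℝ) : (wt k ^ r) ^ 2 = wt k ^ (2 * r) := by
  rw [← Real.rpow_natCast (wt k ^ r) 2, ← Real.rpow_mul (wt_pos k).le]
  norm_num [mul_comm]

lemma summable_wt_neg {r : ℝ} (hr : 1 < r) :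
    Summable fun k : ℤ => wt k ^ (-r) := by
  have hnat : Summable fun n : ℕ => ((n : ℝ)) ^ (-r) := by
    refine (Real.summable_nat_rpow_inv.mpr hr).congr fun n => ?_
    rw [Real.rpow_neg (Nat.cast_nonneg n)]
  have hadd : Summable fun n : ℕ => (((n : ℝ)) + 1) ^ (-r) := by
    have := (summable_nat_add_iff (f := fun n : ℕ => ((n : ℝ)) ^ (-r)) 1).mpr hnat
    refine this.congr fun n => ?_
    push_cast
    ring_nf
  refine Summable.of_nat_of_neg (hadd.congr fun n => ?_) (hadd.congr fun n => ?_) <;>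
    · unfold wt; norm_num [add_comm]

lemma wt_sub_le (k j : ℤ) : wt (k - j) ≤ 2 * max (wt k) (wt j) := by
  unfold wt
  rcases le_total |(k : ℝ)| |(j : ℝ)| with h | h
  · have h2 : (1 : ℝ) + |(j : ℝ)| ≤ max (1 + |(k:ℝ)|) (1 + |(j:ℝ)|) := le_max_right _ _
    push_cast
    nlinarith [abs_sub ((k:ℝ)) ((j:ℝ)), abs_nonneg ((j:ℝ))]
  · have h2 : (1 : ℝ) + |(k : ℝ)| ≤ max (1 + |(k:ℝ)|) (1 + |(j:ℝ)|) := le_max_left _ _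
    push_cast
    nlinarith [abs_sub ((k:ℝ)) ((j:ℝ)), abs_nonneg ((k:ℝ))]

lemma wt_sub_rpow_le (k j : ℤ) {t : ℝ} (ht : 0 ≤ t) :
    wt (k - j) ^ t ≤ 2 ^ t * (wt k ^ t + wt j ^ t) := by
  have h2t : (0:ℝ) ≤ 2 ^ t := Real.rpow_nonneg (by norm_num) t
  rcases le_total (wt k) (wt j) with h | h
  · have h1 : wt (k - j) ≤ 2 * wt j := (wt_sub_le k j).trans (by rw [max_eq_right h])
    calc wt (k-j) ^ t ≤ (2 * wt j) ^ t := Real.rpow_le_rpow (wt_pos _).le h1 ht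
      _ = 2 ^ t * wt j ^ t := Real.mul_rpow (by norm_num) (wt_pos _).le
      _ ≤ 2 ^ t * (wt k ^ t + wt j ^ t) := by
          nlinarith [Real.rpow_nonneg (wt_pos k).le t]
  · have h1 : wt (k - j) ≤ 2 * wt k := (wt_sub_le k j).trans (by rw [max_eq_left h])
    calc wt (k-j) ^ t ≤ (2 * wt k) ^ t := Real.rpow_le_rpow (wt_pos _).le h1 ht
      _ = 2 ^ t * wt k ^ t := Real.mul_rpow (by norm_num) (wt_pos _).le
      _ ≤ 2 ^ t * (wt k ^ t + wt j ^ t) := by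
          nlinarith [Real.rpow_nonneg (wt_pos j).le t]

set_option maxHeartbeats 1000000 in
theorem statement12 (m : ℕ) (hm : 0 < m) (α : ℝ) (hα0 : 0 ≤ α) (hα1 : α < 1)
    (v : ℤ → ℂ) (hv : MemHs (-((m : ℝ) * α)) v) (hv0 : v 0 = 0)
    (hreal : ∀ k : ℤ, v (-k) = starRingEnd ℂ (v k))
    (lam : ℂ)
    (hlam : ∃ a : ℤ → ℂ, a ≠ 0 ∧ MemHs ((m : ℝ) * (2 - α)) a ∧
      ∀ k : ℤ, (k : ℂ) ^ (2 * m) * (Real.pi : ℂ) ^ (2 * m) * a k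
        + ∑' j : ℤ, v (k - j) * a j = lam * a k) :
    lam.im = 0 := by
  obtain ⟨a, ha0, haMem, heq⟩ := hlam
  have hm1 : (1 : ℝ) ≤ (m : ℝ) := by exact_mod_cast hm
  set t : ℝ := (m : ℝ) * α with ht_def
  set s : ℝ := (m : ℝ) * (2 - α) with hs_def
  have ht0 : 0 ≤ t := mul_nonneg (Nat.cast_nonneg m) hα0
  have hts : t ≤ s := by rw [ht_def, hs_def]; nlinarith
  have h1s : 1 ≤ s := by rw [hs_def]; nlinarith
  have hms : (m : ℝ) ≤ s := by rw [hs_def]; nlinarith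
  have haS : Summable fun k : ℤ => wt k ^ (2 * s) * ‖a k‖ ^ 2 := haMem
  have hvS : Summable fun k : ℤ => wt k ^ (2 * -t) * ‖v k‖ ^ 2 := hv
  set b : ℤ → ℝ := fun k => ‖a k‖ with hb_def
  set c : ℤ → ℝ := fun k => wt k ^ t * ‖a k‖ with hc_def
  set w : ℤ → ℝ := fun l => wt l ^ (-t) * ‖v l‖ with hw_def
  have hb0 : ∀ k, 0 ≤ b k := fun k => norm_nonneg _
  have hc0 : ∀ k, 0 ≤ c k := fun k =>
    mul_nonneg (Real.rpow_nonneg (wt_pos k).le t) (norm_nonneg _)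
  have hw0 : ∀ l, 0 ≤ w l := fun l =>
    mul_nonneg (Real.rpow_nonneg (wt_pos l).le _) (norm_nonneg _)
  have hb2 : Summable fun k => b k ^ 2 := by
    refine Summable.of_nonneg_of_le (fun k => sq_nonneg _) (fun k => ?_) haS
    have := one_le_wt_rpow k (by positivity : (0:ℝ) ≤ 2 * s)
    nlinarith [sq_nonneg (b k)]
  have hc2 : Summable fun k => c k ^ 2 := by
    refine Summable.of_nonneg_of_le (fun k => sq_nonneg _) (fun k => ?_) haS
    have h1 : c k ^ 2 = wt k ^ (2 * t) * ‖a k‖ ^ 2 := by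
      rw [hc_def]; simp only [mul_pow, wt_sq_rpow]
    rw [h1]
    have h2 : wt k ^ (2 * t) ≤ wt k ^ (2 * s) :=
      Real.rpow_le_rpow_of_exponent_le (one_le_wt k) (by linarith)
    nlinarith [sq_nonneg ‖a k‖]
  have hb1 : Summable b := by
    have hwsum : Summable fun k : ℤ => wt k ^ (-(2 * s)) := summable_wt_neg (by linarith)
    refine Summable.of_nonneg_of_le hb0 (fun k => ?_) ((hwsum.add haS).div_const 2)
    have key := two_mul_le_add_sq (wt k ^ (-s)) (wt k ^ s * b k)
    have hcancel : wt k ^ (-s) * (wt k ^ s * b k) = b k := by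
      rw [← mul_assoc, ← Real.rpow_add (wt_pos k), neg_add_cancel, Real.rpow_zero, one_mul]
    have hsq1 : (wt k ^ (-s)) ^ 2 = wt k ^ (-(2 * s)) := by
      rw [wt_sq_rpow]; ring_nf
    have hsq2 : (wt k ^ s * b k) ^ 2 = wt k ^ (2 * s) * ‖a k‖ ^ 2 := by
      rw [mul_pow, wt_sq_rpow, hb_def]
    rw [hsq1, hsq2] at key
    have key2 : 2 * b k = 2 * wt k ^ (-s) * (wt k ^ s * b k) := by rw [mul_assoc, hcancel]
    linarith
  have hw2 : Summable fun l => w l ^ 2 := by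
    refine hvS.congr fun l => ?_
    rw [hw_def]; simp only [mul_pow, wt_sq_rpow]
  -- summability of the dominating terms on ℤ × ℤ
  have hA1 : Summable fun p : ℤ × ℤ => w (p.1 - p.2) ^ 2 * b p.2 := by
    refine (Equiv.summable_iff (⟨fun p => (p.1 + p.2, p.2), fun p => (p.1 - p.2, p.2),
      fun p => by simp, fun p => by simp⟩ : ℤ × ℤ ≃ ℤ × ℤ)).mp ?_
    refine ((hw2.mul_of_nonneg hb1 (fun l => sq_nonneg _) hb0)).congr fun p => ?_
    simp [Function.comp]
  have hA3 : Summable fun p : ℤ × ℤ => w (p.1 - p.2) ^ 2 * b p.1 := by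
    refine (Equiv.summable_iff (⟨fun p => (p.1, p.1 - p.2), fun p => (p.1, p.1 - p.2),
      fun p => by simp, fun p => by simp⟩ : ℤ × ℤ ≃ ℤ × ℤ)).mp ?_
    refine ((hb1.mul_of_nonneg hw2 hb0 (fun l => sq_nonneg _))).congr fun p => ?_
    simp [Function.comp, mul_comm]
  have hA2 : Summable fun p : ℤ × ℤ => c p.1 ^ 2 * b p.2 :=
    hc2.mul_of_nonneg hb1 (fun k => sq_nonneg _) hb0
  have hA4 : Summable fun p : ℤ × ℤ => b p.1 * c p.2 ^ 2 :=
    hb1.mul_of_nonneg hc2 hb0 (fun k => sq_nonneg _)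
  set G : ℤ × ℤ → ℝ := fun p =>
    (2:ℝ) ^ t * ((w (p.1 - p.2) ^ 2 * b p.2 + c p.1 ^ 2 * b p.2
      + (w (p.1 - p.2) ^ 2 * b p.1 + b p.1 * c p.2 ^ 2)) / 2) with hG_def
  have hGsum : Summable G :=
    ((((hA1.add hA2).add (hA3.add hA4)).div_const 2).mul_left _)
  -- the norm bound
  have hv_eq : ∀ l, ‖v l‖ = w l * wt l ^ t := by
    intro l
    rw [hw_def]
    have h : wt l ^ (-t) * ‖v l‖ * wt l ^ t = ‖v l‖ * (wt l ^ (-t) * wt l ^ t) := by ring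
    rw [h, ← Real.rpow_add (wt_pos l), neg_add_cancel, Real.rpow_zero, mul_one]
  have hFG : ∀ p : ℤ × ℤ, ‖(starRingEnd ℂ) (a p.1) * v (p.1 - p.2) * a p.2‖ ≤ G p := by
    rintro ⟨k, j⟩
    have hnorm : ‖(starRingEnd ℂ) (a k) * v (k - j) * a j‖ = b k * ‖v (k - j)‖ * b j := by
      simp [hb_def, norm_mul, mul_comm, mul_assoc, mul_left_comm]
    have h2t : (0:ℝ) ≤ (2:ℝ) ^ t := Real.rpow_nonneg (by norm_num) t
    have hsplit := wt_sub_rpow_le k j ht0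
    have step1 : b k * (w (k - j) * wt (k - j) ^ t) * b j
        ≤ 2 ^ t * (w (k - j) * c k * b j + w (k - j) * b k * c j) := by
      have hbb : 0 ≤ b k * b j := mul_nonneg (hb0 k) (hb0 j)
      have hwkj := hw0 (k - j)
      have h1 : b k * (w (k - j) * wt (k - j) ^ t) * b j
          ≤ b k * (w (k - j) * (2 ^ t * (wt k ^ t + wt j ^ t))) * b j := by
        nlinarith [mul_le_mul_of_nonneg_left hsplit hwkj]
      refine h1.trans (le_of_eq ?_)
      rw [hc_def, hb_def]
      ring
    have am1 : w (k - j) * c k * b j ≤ (w (k - j) ^ 2 * b j + c k ^ 2 * b j) / 2 := by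
      nlinarith [mul_le_mul_of_nonneg_right (two_mul_le_add_sq (w (k - j)) (c k)) (hb0 j)]
    have am2 : w (k - j) * b k * c j ≤ (w (k - j) ^ 2 * b k + b k * c j ^ 2) / 2 := by
      nlinarith [mul_le_mul_of_nonneg_right (two_mul_le_add_sq (w (k - j)) (c j)) (hb0 k)]
    calc ‖(starRingEnd ℂ) (a k) * v (k - j) * a j‖
        = b k * (w (k - j) * wt (k - j) ^ t) * b j := by rw [hnorm, hv_eq (k - j)]
      _ ≤ 2 ^ t * (w (k - j) * c k * b j + w (k - j) * b k * c j) := step1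
      _ ≤ G (k, j) := by rw [hG_def]; simp only; nlinarith
  have hF : Summable fun p : ℤ × ℤ => ‖(starRingEnd ℂ) (a p.1) * v (p.1 - p.2) * a p.2‖ :=
    Summable.of_nonneg_of_le (fun p => norm_nonneg _) hFG hGsum
  have hfC : Summable fun p : ℤ × ℤ => (starRingEnd ℂ) (a p.1) * v (p.1 - p.2) * a p.2 :=
    Summable.of_norm hF
  set Q : ℂ := ∑' p : ℤ × ℤ, (starRingEnd ℂ) (a p.1) * v (p.1 - p.2) * a p.2 with hQ_def
  -- Fubini
  have hQ : Q = ∑' k : ℤ, (starRingEnd ℂ) (a k) * ∑' j : ℤ, v (k - j) * a j := by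
    rw [hQ_def, Summable.tsum_prod hfC]
    refine tsum_congr fun k => ?_
    rw [← tsum_mul_left]
    exact tsum_congr fun j => by ring
  -- conjugation symmetry
  have hconjQ : (starRingEnd ℂ) Q = Q := by
    rw [hQ_def, starRingEnd_apply, tsum_star]
    have hterm : ∀ p : ℤ × ℤ,
        star ((starRingEnd ℂ) (a p.1) * v (p.1 - p.2) * a p.2)
          = (starRingEnd ℂ) (a p.2) * v (p.2 - p.1) * a p.1 := by
      rintro ⟨k, j⟩
      have hvconj : (starRingEnd ℂ) (v (k - j)) = v (j - k) := by
        rw [← hreal (k - j), neg_sub]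
      simp only [RCLike.star_def, map_mul, Complex.conj_conj, hvconj]
      ring
    rw [tsum_congr hterm]
    have h := Equiv.tsum_eq (Equiv.prodComm ℤ ℤ)
      (fun p : ℤ × ℤ => (starRingEnd ℂ) (a p.1) * v (p.1 - p.2) * a p.2)
    simpa using h
  have hQim : Q.im = 0 := by
    have h := congrArg Complex.im hconjQ
    rw [Complex.conj_im] at h
    linarith
  -- the diagonal part
  set X : ℤ → ℂ := fun k =>
    (k : ℂ) ^ (2 * m) * (Real.pi : ℂ) ^ (2 * m) * ((starRingEnd ℂ) (a k) * a k) with hX_def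
  have hNC : ∀ k, (starRingEnd ℂ) (a k) * a k = ((‖a k‖ ^ 2 : ℝ) : ℂ) := fun k => by
    rw [mul_comm, Complex.mul_conj]
    norm_cast
    simp [Complex.normSq_eq_norm_sq]
  have hXnorm : ∀ k : ℤ, ‖X k‖ ≤ Real.pi ^ (2 * m) * (wt k ^ (2 * s) * ‖a k‖ ^ 2) := by
    intro k
    have h1 : ‖X k‖ = |(k:ℝ)| ^ (2 * m) * Real.pi ^ (2 * m) * ‖a k‖ ^ 2 := by
      rw [hX_def]
      simp only
      rw [hNC k]
      rw [norm_mul, norm_mul, norm_pow, norm_pow, Complex.norm_intCast, Complex.norm_real,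
        Complex.norm_real]
      rw [Real.norm_eq_abs, Real.norm_eq_abs, abs_of_nonneg Real.pi_pos.le,
        abs_of_nonneg (by positivity : (0:ℝ) ≤ ‖a k‖ ^ 2)]
    have h2 : |(k:ℝ)| ^ (2 * m) ≤ wt k ^ (2 * s) := by
      have ha : |(k:ℝ)| ^ (2 * m) ≤ wt k ^ (2 * m) := by
        apply pow_le_pow_left₀ (abs_nonneg _)
        unfold wt; linarith [abs_nonneg ((k:ℝ))]
      have hb' : (wt k : ℝ) ^ (2 * m) = wt k ^ (((2 * m : ℕ) : ℝ)) :=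
        (Real.rpow_natCast _ _).symm
      have hcde : wt k ^ (((2 * m : ℕ) : ℝ)) ≤ wt k ^ (2 * s) := by
        apply Real.rpow_le_rpow_of_exponent_le (one_le_wt k)
        push_cast
        linarith
      calc |(k:ℝ)| ^ (2 * m) ≤ wt k ^ (2 * m) := ha
        _ = wt k ^ (((2 * m : ℕ) : ℝ)) := hb'
        _ ≤ wt k ^ (2 * s) := hcde
    rw [h1]
    have hpi : (0:ℝ) ≤ Real.pi ^ (2 * m) := pow_nonneg Real.pi_pos.le _
    have hsq : (0:ℝ) ≤ ‖a k‖ ^ 2 := sq_nonneg _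
    calc |(k:ℝ)| ^ (2 * m) * Real.pi ^ (2 * m) * ‖a k‖ ^ 2
        ≤ wt k ^ (2 * s) * Real.pi ^ (2 * m) * ‖a k‖ ^ 2 :=
          mul_le_mul_of_nonneg_right (mul_le_mul_of_nonneg_right h2 hpi) hsq
      _ = Real.pi ^ (2 * m) * (wt k ^ (2 * s) * ‖a k‖ ^ 2) := by ring
  have hXsum : Summable X :=
    Summable.of_norm_bounded (haS.mul_left (Real.pi ^ (2 * m))) hXnorm
  have hLsum : Summable fun k => lam * ((starRingEnd ℂ) (a k) * a k) := by
    have h0 : Summable fun k : ℤ => ((‖a k‖ ^ 2 : ℝ) : ℂ) :=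
      hb2.map Complex.ofRealHom Complex.continuous_ofReal
    exact (h0.congr fun k => (hNC k).symm).mul_left lam
  have hYsum : Summable fun k : ℤ => (starRingEnd ℂ) (a k) * ∑' j : ℤ, v (k - j) * a j := by
    refine (hLsum.sub hXsum).congr fun k => ?_
    have h2 : (∑' j : ℤ, v (k - j) * a j)
        = lam * a k - (k : ℂ) ^ (2 * m) * (Real.pi : ℂ) ^ (2 * m) * a k := by
      linear_combination heq k
    rw [h2, hX_def]
    ring
  -- main identity
  set N : ℝ := ∑' k : ℤ, b k ^ 2 with hN_def
  have hmain : (∑' k : ℤ, X k) + Q = lam * (N : ℂ) := by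
    have h1 : ∑' k : ℤ, (X k + (starRingEnd ℂ) (a k) * ∑' j : ℤ, v (k - j) * a j)
        = ∑' k : ℤ, lam * ((starRingEnd ℂ) (a k) * a k) := by
      refine tsum_congr fun k => ?_
      simp only [hX_def]
      linear_combination (starRingEnd ℂ) (a k) * heq k
    rw [Summable.tsum_add hXsum hYsum, tsum_mul_left] at h1
    rw [hQ, h1, hN_def]
    congr 1
    rw [Complex.ofReal_tsum]
    exact tsum_congr fun k => hNC k
  have hXim : (∑' k : ℤ, X k).im = 0 := by
    have hX' : ∀ k : ℤ, X k = (((k:ℝ) ^ (2 * m) * Real.pi ^ (2 * m) * ‖a k‖ ^ 2 : ℝ) : ℂ) := by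
      intro k
      rw [hX_def]
      simp only
      rw [hNC k]
      push_cast
      ring
    rw [tsum_congr hX', ← Complex.ofReal_tsum]
    exact Complex.ofReal_im _
  -- conclusion
  obtain ⟨k0, hk0⟩ := Function.ne_iff.mp ha0
  have hNpos : 0 < N :=
    Summable.tsum_pos hb2 (fun k => sq_nonneg _) k0 (pow_pos (norm_pos_iff.mpr hk0) 2)
  have him := congrArg Complex.im hmain
  rw [Complex.add_im, hXim, hQim] at him
  have : lam.im * N = 0 := by
    have h := him.symm
    rw [Complex.mul_im, Complex.ofReal_im, Complex.ofReal_re] at h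
    linarith
  rcases mul_eq_zero.mp this with h | h
  · exact h
  · exact absurd h hNpos.ne'
end
end

section
/- Let m ∈ ℕ, 0 ≤ α < 1, R > 0, and M₀ ≥ 1 with M₀^{(1−α)/2 + 1/4} > 2^{2m+2}·R. Then for every v ∈ h^{-mα}_0 with ‖v‖_{h^{-mα}} ≤ R, every M ≥ M₀, and every λ ∈ Ext_M, the operator S_{mλ} on ℓ²(ℤ,ℂ) satisfies ‖S_{mλ}‖ < 1/2. -/
open scoped BigOperators
noncomputable section

namespace Stmt14Aux

lemma telescope_key (M s : ℝ) (hM : 1 ≤ M) (hs : 1 ≤ s) (hss : s ^ 2 = M) (i : ℕ) :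
    (M + 9 * ((i : ℝ) + 1) ^ 2)⁻¹ ≤
      2/3 * ((3 * (i:ℝ) + s)⁻¹ - (3 * ((i:ℝ)+1) + s)⁻¹) := by
  have hi : (0:ℝ) ≤ (i:ℝ) := Nat.cast_nonneg i
  have h1 : 0 < 3 * (i:ℝ) + s := by linarith
  have h2 : 0 < 3 * ((i:ℝ)+1) + s := by linarith
  have h3 : 0 < M + 9 * ((i:ℝ)+1)^2 := by nlinarith
  have heq : (3 * (i:ℝ) + s)⁻¹ - (3 * ((i:ℝ)+1) + s)⁻¹
      = 3 / ((3 * (i:ℝ) + s) * (3 * ((i:ℝ)+1) + s)) := by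
    field_simp
    ring
  rw [heq, show (2:ℝ)/3 * (3 / ((3 * (i:ℝ) + s) * (3 * ((i:ℝ)+1) + s))) = 2 / ((3 * (i:ℝ) + s) * (3 * ((i:ℝ)+1) + s)) by field_simp, inv_eq_one_div, div_le_div_iff₀ h3 (by positivity)]
  nlinarith [sq_nonneg (s - 3*(i:ℝ) - 3/2), hi]

lemma telescope_sum (M : ℝ) (hM : 1 ≤ M) :
    Summable (fun n : ℕ => (M + 9 * ((n : ℝ) + 1) ^ 2)⁻¹) ∧
    ∑' n : ℕ, (M + 9 * ((n : ℝ) + 1) ^ 2)⁻¹ ≤ 2 / (3 * Real.sqrt M) := by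
  have hM0 : (0:ℝ) < M := lt_of_lt_of_le one_pos hM
  have hs : 1 ≤ Real.sqrt M := by
    rw [show (1:ℝ) = Real.sqrt 1 by simp]
    exact Real.sqrt_le_sqrt hM
  set s := Real.sqrt M with hsdef
  have hs0 : (0:ℝ) < s := lt_of_lt_of_le one_pos hs
  have hss : s ^ 2 = M := Real.sq_sqrt (le_of_lt hM0)
  have hnn : ∀ n : ℕ, 0 ≤ (M + 9 * ((n : ℝ) + 1) ^ 2)⁻¹ := by
    intro n; positivity
  have partial_le : ∀ n : ℕ,
      ∑ i ∈ Finset.range n, (M + 9 * ((i : ℝ) + 1) ^ 2)⁻¹ ≤ 2 / (3 * s) := by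
    intro n
    have step1 : ∑ i ∈ Finset.range n, (M + 9 * ((i : ℝ) + 1) ^ 2)⁻¹
        ≤ ∑ i ∈ Finset.range n,
          ((fun j : ℕ => 2/3 * (3 * (j:ℝ) + s)⁻¹) i - (fun j : ℕ => 2/3 * (3 * (j:ℝ) + s)⁻¹) (i+1)) := by
      refine Finset.sum_le_sum fun i _ => ?_
      have := telescope_key M s hM hs hss i
      simp only [Nat.cast_add, Nat.cast_one]
      ring_nf
      ring_nf at this
      linarith
    refine le_trans step1 ?_
    rw [Finset.sum_range_sub' (fun j : ℕ => 2/3 * (3 * (j:ℝ) + s)⁻¹) n]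
    have h1 : 0 ≤ 2/3 * (3 * (n:ℝ) + s)⁻¹ := by positivity
    have h2 : (2:ℝ)/3 * (3 * ((0:ℕ):ℝ) + s)⁻¹ = 2 / (3 * s) := by
      have : 3 * ((0:ℕ):ℝ) + s = s := by norm_num
      rw [this]
      rw [div_eq_mul_inv (2:ℝ) (3*s), mul_inv]
      ring
    rw [h2]
    linarith
  exact ⟨summable_of_sum_range_le hnn partial_le, Real.tsum_le_of_sum_range_le hnn partial_le⟩

lemma sumG (M : ℝ) (hM : 1 ≤ M) (d : ℤ → ℝ) (hdpos : ∀ k, 0 < d k)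
    (hd : ∀ k : ℤ, (M + 9 * (k:ℝ)^2) / 2 ≤ d k) :
    Summable (fun j : ℤ => (d j)⁻¹) ∧ ∑' j : ℤ, (d j)⁻¹ ≤ 14 / (3 * Real.sqrt M) := by
  have hM0 : (0:ℝ) < M := lt_of_lt_of_le one_pos hM
  have hs : 1 ≤ Real.sqrt M := by
    rw [show (1:ℝ) = Real.sqrt 1 by simp]
    exact Real.sqrt_le_sqrt hM
  have hs0 : (0:ℝ) < Real.sqrt M := lt_of_lt_of_le one_pos hs
  obtain ⟨hT, hTle⟩ := telescope_sum M hM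
  set u : ℤ → ℝ := fun j => 2 * (M + 9 * (j:ℝ)^2)⁻¹ with hu
  have hpt : ∀ j : ℤ, (d j)⁻¹ ≤ u j := by
    intro j
    have h1 : (0:ℝ) < (M + 9 * (j:ℝ)^2) / 2 := by positivity
    have := inv_anti₀ h1 (hd j)
    calc (d j)⁻¹ ≤ ((M + 9 * (j:ℝ)^2) / 2)⁻¹ := this
      _ = u j := by rw [hu]; field_simp
  have hun : ∀ j : ℤ, 0 ≤ u j := by intro j; rw [hu]; positivity
  have hshift1 : (fun n : ℕ => u ((n:ℤ) + 1)) = fun n : ℕ => 2 * (M + 9 * ((n:ℝ) + 1) ^ 2)⁻¹ := by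
    funext n; simp only [hu]; norm_num
  have hshift2 : (fun n : ℕ => u (-((n:ℤ) + 1))) = fun n : ℕ => 2 * (M + 9 * ((n:ℝ) + 1) ^ 2)⁻¹ := by
    funext n; simp only [hu]; push_cast; ring_nf
  have hsum1 : Summable (fun n : ℕ => u ((n:ℤ) + 1)) := by
    rw [hshift1]; exact hT.mul_left 2
  have hsum2 : Summable (fun n : ℕ => u (-((n:ℤ) + 1))) := by
    rw [hshift2]; exact hT.mul_left 2
  have husum : Summable u := Summable.of_add_one_of_neg_add_one hsum1 hsum2
  have hdsum : Summable (fun j : ℤ => (d j)⁻¹) :=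
    Summable.of_nonneg_of_le (fun j => (inv_nonneg.mpr (hdpos j).le)) hpt husum
  refine ⟨hdsum, ?_⟩
  have h2 : ∑' j : ℤ, (d j)⁻¹ ≤ ∑' j, u j := Summable.tsum_le_tsum hpt hdsum husum
  have h3 : ∑' j, u j = (∑' n : ℕ, u ((n:ℤ)+1)) + u 0 + ∑' n : ℕ, u (-((n:ℤ)+1)) :=
    tsum_of_add_one_of_neg_add_one hsum1 hsum2
  have hu0 : u 0 = 2 * M⁻¹ := by rw [hu]; norm_num
  have hb1 : ∑' n : ℕ, u ((n:ℤ)+1) ≤ 4 / (3 * Real.sqrt M) := by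
    rw [hshift1, tsum_mul_left]
    calc 2 * ∑' n : ℕ, (M + 9 * ((n:ℝ) + 1) ^ 2)⁻¹ ≤ 2 * (2 / (3 * Real.sqrt M)) := by linarith
      _ = 4 / (3 * Real.sqrt M) := by ring
  have hb2 : ∑' n : ℕ, u (-((n:ℤ)+1)) ≤ 4 / (3 * Real.sqrt M) := by
    rw [hshift2, tsum_mul_left]
    calc 2 * ∑' n : ℕ, (M + 9 * ((n:ℝ) + 1) ^ 2)⁻¹ ≤ 2 * (2 / (3 * Real.sqrt M)) := by linarith
      _ = 4 / (3 * Real.sqrt M) := by ring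
  have hu0le : u 0 ≤ 2 / Real.sqrt M := by
    rw [hu0]
    have hsM : Real.sqrt M ≤ M := by
      nlinarith [Real.sq_sqrt hM0.le]
    rw [div_eq_mul_inv]
    exact mul_le_mul_of_nonneg_left (inv_anti₀ hs0 hsM) (by norm_num)
  rw [h3] at h2
  have : (4:ℝ) / (3 * Real.sqrt M) + 2 / Real.sqrt M + 4 / (3 * Real.sqrt M) = 14 / (3 * Real.sqrt M) := by
    field_simp
    ring
  linarith

lemma mix_le_add (a b c : ℝ) (ha : 0 ≤ a) (hb : 0 ≤ b) (h0 : 0 ≤ c) (h1 : c ≤ 1) :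
    a ^ (1 - c) * b ^ c ≤ a + b := by
  have hmax : 0 ≤ max a b := le_trans ha (le_max_left a b)
  have h2 : a ^ (1 - c) * b ^ c ≤ (max a b) ^ (1 - c) * (max a b) ^ c := by
    apply mul_le_mul (Real.rpow_le_rpow ha (le_max_left _ _) (by linarith))
      (Real.rpow_le_rpow hb (le_max_right _ _) h0) (Real.rpow_nonneg hb _)
      (Real.rpow_nonneg hmax _)
  have h3 : (max a b) ^ (1 - c) * (max a b) ^ c = max a b := by
    rw [← Real.rpow_add' hmax (by norm_num)]
    norm_num
  rw [h3] at h2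
  exact le_trans h2 (max_le_add_of_nonneg ha hb)

lemma diag_lower (m : ℕ) (M : ℝ) (lam : ℂ) (hlam : lam.re ≤ |lam.im| - M) (k : ℤ) :
    (M + (Real.pi * |(k:ℝ)|) ^ (2*m)) / 2 ≤ diagAbs m lam k := by
  set μ : ℝ := (Real.pi * |(k:ℝ)|) ^ (2*m) with hμ
  have hμ0 : 0 ≤ μ := by positivity
  have hcast : (k : ℂ) ^ (2 * m) * (Real.pi : ℂ) ^ (2 * m) = ((μ : ℝ) : ℂ) := by
    rw [hμ]
    have h1 : (Real.pi * |(k:ℝ)|) ^ (2*m) = (k:ℝ)^(2*m) * Real.pi^(2*m) := by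
      rw [mul_pow]
      have : |(k:ℝ)| ^ (2*m) = (k:ℝ) ^ (2*m) := by
        rw [pow_abs, abs_of_nonneg ((even_two_mul m).pow_nonneg _)]
      rw [this]; ring
    rw [h1]
    push_cast
    ring
  have habs : diagAbs m lam k = ‖lam - ((μ:ℝ):ℂ)‖ := by
    rw [diagAbs, hcast]
  have him : (lam - ((μ:ℝ):ℂ)).im = lam.im := by simp
  have hre : (lam - ((μ:ℝ):ℂ)).re = lam.re - μ := by simp
  have h1 : |lam.im| ≤ ‖lam - ((μ:ℝ):ℂ)‖ := by
    rw [← him]; exact Complex.abs_im_le_norm _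
  have h2 : μ - lam.re ≤ ‖lam - ((μ:ℝ):ℂ)‖ := by
    have := Complex.abs_re_le_norm (lam - ((μ:ℝ):ℂ))
    rw [hre] at this
    have h3 : μ - lam.re ≤ |lam.re - μ| := by
      rw [abs_sub_comm]; exact le_abs_self _
    linarith
  rw [habs]
  linarith

lemma smat_sq (m : ℕ) (v : ℤ → ℂ) (lam : ℂ) (k j : ℤ)
    (hk : 0 < diagAbs m lam k) (hj : 0 < diagAbs m lam j) :
    ‖Smat m v lam k j‖ ^ 2 = ‖v (k - j)‖ ^ 2 * (diagAbs m lam k * diagAbs m lam j)⁻¹ := by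
  rw [Smat, norm_div, Complex.norm_real, Real.norm_of_nonneg (by positivity), div_pow, mul_pow,
    Real.sq_sqrt hk.le, Real.sq_sqrt hj.le, div_eq_mul_inv]

/-- The shear equivalence `(l, j) ↦ (l + j, j)` on `ℤ × ℤ`. -/
def shearEquiv : ℤ × ℤ ≃ ℤ × ℤ where
  toFun p := (p.1 + p.2, p.2)
  invFun p := (p.1 - p.2, p.2)
  left_inv p := by simp
  right_inv p := by simp

lemma rpow_toReal_two (y : ℝ) : y ^ (2 : ENNReal).toReal = y ^ 2 := by
  rw [show ((2 : ENNReal).toReal) = ((2:ℕ):ℝ) by norm_num, Real.rpow_natCast]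

lemma memℓp_two_iff (f : ℤ → ℂ) : Memℓp f 2 ↔ Summable fun i => ‖f i‖ ^ 2 := by
  rw [memℓp_gen_iff (p := 2) (by norm_num), funext fun i => rpow_toReal_two ‖f i‖]

lemma lp_norm_sq (f : lp (fun _ : ℤ => ℂ) 2) : ‖f‖ ^ 2 = ∑' k, ‖f k‖ ^ 2 := by
  have := lp.norm_rpow_eq_tsum (p := 2) (by norm_num) f
  simpa only [rpow_toReal_two] using this

end Stmt14Aux

set_option maxHeartbeats 1600000 in
open Stmt14Aux in
theorem statement14 (m : ℕ) (hm : 0 < m) (α R M₀ : ℝ)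
    (hα0 : 0 ≤ α) (hα1 : α < 1) (hR : 0 < R) (hM₀ : 1 ≤ M₀)
    (hM₀R : M₀ ^ ((1 - α) / 2 + 1 / 4) > 2 ^ (2 * m + 2) * R) :
    ∀ v : ℤ → ℂ, MemHs (-((m : ℝ) * α)) v → v 0 = 0 → hsNorm (-((m : ℝ) * α)) v ≤ R →
      ∀ M : ℝ, M₀ ≤ M → ∀ lam ∈ ExtSet M,
        MatOpNormLT (Smat m v lam) (1 / 2) := by
  intro v hv hv0 hvR M hM lam hlam
  have hm1 : (1:ℝ) ≤ (m:ℝ) := by exact_mod_cast hm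
  have hM1 : (1:ℝ) ≤ M := le_trans hM₀ hM
  have hMpos : (0:ℝ) < M := lt_of_lt_of_le one_pos hM1
  have hsM1 : (1:ℝ) ≤ Real.sqrt M := by
    rw [show (1:ℝ) = Real.sqrt 1 by simp]
    exact Real.sqrt_le_sqrt hM1
  have hsM0 : (0:ℝ) < Real.sqrt M := lt_of_lt_of_le one_pos hsM1
  have hπ : (3:ℝ) < Real.pi := Real.pi_gt_three
  set x : ℝ := (m:ℝ) * α with hxdef
  have hx0 : (0:ℝ) ≤ x := mul_nonneg (Nat.cast_nonneg m) hα0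
  have hxa : 0 ≤ 2*x - α := by nlinarith
  set d : ℤ → ℝ := diagAbs m lam with hddef
  have hd : ∀ k : ℤ, (M + (Real.pi * |(k:ℝ)|) ^ (2*m)) / 2 ≤ d k :=
    fun k => diag_lower m M lam hlam k
  have hdpos : ∀ k, 0 < d k := by
    intro k
    refine lt_of_lt_of_le ?_ (hd k)
    positivity
  have heven : ∀ l : ℤ, |(l:ℝ)| ^ (2*m) = (l:ℝ) ^ (2*m) := by
    intro l
    rw [pow_abs, abs_of_nonneg ((even_two_mul m).pow_nonneg _)]
  have hpow0 : ∀ l : ℤ, (0:ℝ) ≤ (l:ℝ)^(2*m) := by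
    intro l; rw [← heven l]; positivity
  have hd9 : ∀ k : ℤ, (M + 9 * (k:ℝ)^2) / 2 ≤ d k := by
    intro k
    refine le_trans ?_ (hd k)
    have h9 : 9 * (k:ℝ)^2 ≤ (Real.pi * |(k:ℝ)|) ^ (2*m) := by
      rcases eq_or_ne k 0 with rfl | hk
      · simp [zero_pow (by omega : 2*m ≠ 0)]
      · have hk1 : (1:ℝ) ≤ |(k:ℝ)| := by
          have : (1:ℤ) ≤ |k| := Int.one_le_abs (by exact_mod_cast hk)
          calc (1:ℝ) = ((1:ℤ):ℝ) := by norm_num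
            _ ≤ ((|k|:ℤ):ℝ) := by exact_mod_cast this
            _ = |(k:ℝ)| := by push_cast; ring
        have hπk : (3:ℝ) ≤ Real.pi * |(k:ℝ)| := by nlinarith
        have h3k : 3 * |(k:ℝ)| ≤ Real.pi * |(k:ℝ)| :=
          mul_le_mul_of_nonneg_right hπ.le (abs_nonneg _)
        calc 9 * (k:ℝ)^2 = (3 * |(k:ℝ)|)^2 := by rw [mul_pow, sq_abs]; ring
          _ ≤ (Real.pi * |(k:ℝ)|)^2 := pow_le_pow_left₀ (by positivity) h3k 2
          _ ≤ (Real.pi * |(k:ℝ)|)^(2*m) := pow_le_pow_right₀ (by nlinarith) (by omega)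
    linarith
  obtain ⟨hGsum, hGle⟩ := sumG M hM1 d hdpos hd9
  set G : ℝ := ∑' j : ℤ, (d j)⁻¹ with hGdef
  have hG0 : (0:ℝ) ≤ G := tsum_nonneg (fun j => inv_nonneg.mpr (hdpos j).le)
  have hshift : ∀ l : ℤ, Summable (fun j : ℤ => (d (l + j))⁻¹)
      ∧ (∑' j : ℤ, (d (l + j))⁻¹) = G := by
    intro l
    have h1 : Summable ((fun j : ℤ => (d j)⁻¹) ∘ (Equiv.addLeft l)) :=
      ((Equiv.addLeft l).summable_iff (f := fun j : ℤ => (d j)⁻¹)).mpr hGsum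
    have h2 : ((fun j : ℤ => (d j)⁻¹) ∘ (Equiv.addLeft l)) = fun j : ℤ => (d (l + j))⁻¹ := rfl
    refine ⟨h2 ▸ h1, ?_⟩
    have h3 := (Equiv.addLeft l).tsum_eq (fun j : ℤ => (d j)⁻¹)
    have h4 : (∑' j : ℤ, (d (l + j))⁻¹) = ∑' j : ℤ, (d j)⁻¹ := by
      simpa using h3
    rw [hGdef]
    exact h4
  have hmaxd : ∀ l k : ℤ, |(l:ℝ)| / 2 ≤ |(k:ℝ)| → (M + 2 * (l:ℝ)^(2*m)) / 2 ≤ d k := by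
    intro l k hlk
    refine le_trans ?_ (hd k)
    have key : 2 * (l:ℝ)^(2*m) ≤ (Real.pi * |(k:ℝ)|)^(2*m) := by
      have h1 : Real.pi * (|(l:ℝ)|/2) ≤ Real.pi * |(k:ℝ)| :=
        mul_le_mul_of_nonneg_left hlk Real.pi_pos.le
      have h2 : (Real.pi * (|(l:ℝ)|/2))^(2*m) ≤ (Real.pi * |(k:ℝ)|)^(2*m) :=
        pow_le_pow_left₀ (by positivity) h1 _
      refine le_trans ?_ h2
      rw [show Real.pi * (|(l:ℝ)|/2) = (Real.pi/2) * |(l:ℝ)| by ring, mul_pow]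
      have h4 : (2:ℝ) ≤ (Real.pi/2)^(2*m) := by
        calc (2:ℝ) ≤ (Real.pi/2)^2 := by nlinarith
          _ ≤ (Real.pi/2)^(2*m) := pow_le_pow_right₀ (by nlinarith) (by omega)
      have h5 := heven l
      nlinarith [pow_nonneg (abs_nonneg (l:ℝ)) (2*m), hpow0 l]
    linarith
  have hpair : ∀ l j : ℤ, (d (l + j) * d j)⁻¹ ≤
      2 * (M + 2 * (l:ℝ)^(2*m))⁻¹ * ((d j)⁻¹ + (d (l + j))⁻¹) := by
    intro l j
    have hMl : (0:ℝ) < M + 2 * (l:ℝ)^(2*m) := by nlinarith [hpow0 l]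
    have hcase : |(l:ℝ)| / 2 ≤ |(j:ℝ)| ∨ |(l:ℝ)| / 2 ≤ |((l+j : ℤ):ℝ)| := by
      by_contra hcon
      push_neg at hcon
      obtain ⟨hc1, hc2⟩ := hcon
      have habs : |(l:ℝ)| ≤ |((l+j:ℤ):ℝ)| + |(j:ℝ)| := by
        have he' : ((l:ℤ):ℝ) = ((l+j:ℤ):ℝ) - ((j:ℤ):ℝ) := by push_cast; ring
        rw [he']
        exact abs_sub _ _
      linarith
    have hgoal : ∀ i1 i2 : ℤ, (M + 2 * (l:ℝ)^(2*m)) / 2 ≤ d i1 →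
        (d i1 * d i2)⁻¹ ≤ 2 * (M + 2 * (l:ℝ)^(2*m))⁻¹ * ((d i2)⁻¹ + (d i1)⁻¹) := by
      intro i1 i2 hi1
      have h1 : (d i1)⁻¹ ≤ 2 * (M + 2 * (l:ℝ)^(2*m))⁻¹ := by
        rw [show 2 * (M + 2 * (l:ℝ)^(2*m))⁻¹ = ((M + 2 * (l:ℝ)^(2*m)) / 2)⁻¹ by
          rw [div_eq_mul_inv, mul_inv]; norm_num; ring]
        exact inv_anti₀ (by positivity) hi1
      rw [mul_inv]
      have h2 : (0:ℝ) ≤ (d i2)⁻¹ := inv_nonneg.mpr (hdpos i2).le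
      have h3 : (0:ℝ) ≤ (d i1)⁻¹ := inv_nonneg.mpr (hdpos i1).le
      calc (d i1)⁻¹ * (d i2)⁻¹ ≤ (2 * (M + 2 * (l:ℝ)^(2*m))⁻¹) * (d i2)⁻¹ :=
            mul_le_mul_of_nonneg_right h1 h2
        _ ≤ 2 * (M + 2 * (l:ℝ)^(2*m))⁻¹ * ((d i2)⁻¹ + (d i1)⁻¹) := by
            have : (0:ℝ) ≤ 2 * (M + 2 * (l:ℝ)^(2*m))⁻¹ := by positivity
            nlinarith
    rcases hcase with h | h
    · have := hgoal j (l+j) (hmaxd l j h)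
      rw [mul_comm (d j) (d (l+j))] at this
      have hcomm : (d (l+j))⁻¹ + (d j)⁻¹ = (d j)⁻¹ + (d (l+j))⁻¹ := by ring
      rw [hcomm] at this
      exact this
    · exact hgoal (l+j) j (hmaxd l (l+j) h)
  -- the weight estimate
  have hwt_pos : ∀ l : ℤ, (0:ℝ) < wt l := by
    intro l
    have : (0:ℝ) ≤ |(l:ℝ)| := abs_nonneg _
    rw [wt]; linarith
  set c2 : ℝ := (2:ℝ) ^ (2*x - α) * M ^ (α - 1) with hc2def
  have hc2pos : (0:ℝ) < c2 := by
    apply mul_pos (Real.rpow_pos_of_pos two_pos _) (Real.rpow_pos_of_pos hMpos _)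
  have hwt : ∀ l : ℤ, wt l ^ (2*x) ≤ c2 * (M + 2 * (l:ℝ)^(2*m)) := by
    intro l
    rcases eq_or_ne l 0 with rfl | hl
    · have h1 : wt (0:ℤ) ^ (2*x) = 1 := by
        rw [show wt (0:ℤ) = 1 by rw [wt]; norm_num, Real.one_rpow]
      have h2 : c2 * (M + 2 * ((0:ℤ):ℝ)^(2*m)) = c2 * M := by
        norm_num [zero_pow (by omega : 2*m ≠ 0)]
      rw [h1, h2, hc2def]
      have h3 : (1:ℝ) ≤ (2:ℝ) ^ (2*x - α) := Real.one_le_rpow one_le_two hxa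
      have h4 : M ^ (α - 1) * M = M ^ α := by
        rw [show M ^ α = M ^ ((α - 1) + 1) by norm_num, Real.rpow_add_one hMpos.ne']
      have h5 : (1:ℝ) ≤ M ^ α := Real.one_le_rpow hM1 hα0
      calc (1:ℝ) ≤ M ^ α := h5
        _ = 1 * (M ^ (α-1) * M) := by rw [h4]; ring
        _ ≤ (2:ℝ) ^ (2*x - α) * (M ^ (α-1) * M) := by
            apply mul_le_mul_of_nonneg_right h3
            positivity
        _ = (2:ℝ) ^ (2*x - α) * M ^ (α - 1) * M := by ring
    · have hl1 : (1:ℝ) ≤ |(l:ℝ)| := by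
        have : (1:ℤ) ≤ |l| := Int.one_le_abs (by exact_mod_cast hl)
        calc (1:ℝ) = ((1:ℤ):ℝ) := by norm_num
          _ ≤ ((|l|:ℤ):ℝ) := by exact_mod_cast this
          _ = |(l:ℝ)| := by push_cast; ring
      have habs0 : (0:ℝ) < |(l:ℝ)| := by linarith
      -- LHS ≤ 2^(2x) * |l|^(2x)
      have hL : wt l ^ (2*x) ≤ (2:ℝ) ^ (2*x) * |(l:ℝ)| ^ (2*x) := by
        have h1 : wt l ≤ 2 * |(l:ℝ)| := by rw [wt]; linarith
        calc wt l ^ (2*x) ≤ (2 * |(l:ℝ)|) ^ (2*x) :=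
              Real.rpow_le_rpow (hwt_pos l).le h1 (by linarith)
          _ = (2:ℝ) ^ (2*x) * |(l:ℝ)| ^ (2*x) :=
              Real.mul_rpow (by norm_num) (abs_nonneg _)
      -- RHS ≥ 2^(2x) * |l|^(2x)
      have hR' : (2:ℝ) ^ (2*x) * |(l:ℝ)| ^ (2*x) ≤ c2 * (M + 2 * (l:ℝ)^(2*m)) := by
        have hmix : M ^ (1 - α) * (2 * (l:ℝ)^(2*m)) ^ α ≤ M + 2 * (l:ℝ)^(2*m) :=
          mix_le_add M (2 * (l:ℝ)^(2*m)) α hMpos.le (by nlinarith [hpow0 l]) hα0 hα1.le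
        have hsplit : (2 * (l:ℝ)^(2*m)) ^ α = (2:ℝ)^α * ((l:ℝ)^(2*m)) ^ α :=
          Real.mul_rpow (by norm_num) (hpow0 l)
        have hlp : ((l:ℝ)^(2*m)) ^ α = |(l:ℝ)| ^ (2*x) := by
          rw [← heven l, ← Real.rpow_natCast |(l:ℝ)| (2*m), ← Real.rpow_mul (abs_nonneg _)]
          congr 1
          push_cast [hxdef]
          ring
        -- c2 * (M + 2 l^{2m}) ≥ c2 * M^{1-α} 2^α |l|^{2x} = 2^{2x} M^0 |l|^{2x}
        have hstep : c2 * (M ^ (1-α) * ((2:ℝ)^α * |(l:ℝ)| ^ (2*x))) ≤ c2 * (M + 2 * (l:ℝ)^(2*m)) := by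
          apply mul_le_mul_of_nonneg_left _ hc2pos.le
          rw [← hlp, ← hsplit]
          exact hmix
        refine le_trans (le_of_eq ?_) hstep
        rw [hc2def]
        have e1 : (2:ℝ) ^ (2*x - α) * (2:ℝ) ^ α = (2:ℝ) ^ (2*x) := by
          rw [← Real.rpow_add two_pos]; norm_num
        have e2 : M ^ (α - 1) * M ^ (1 - α) = 1 := by
          rw [← Real.rpow_add hMpos]; norm_num
        calc (2:ℝ) ^ (2*x) * |(l:ℝ)| ^ (2*x)
            = ((2:ℝ) ^ (2*x - α) * (2:ℝ) ^ α) * (M ^ (α - 1) * M ^ (1 - α)) * |(l:ℝ)| ^ (2*x) := by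
              rw [e1, e2]; ring
          _ = (2:ℝ) ^ (2*x - α) * M ^ (α - 1) * (M ^ (1-α) * ((2:ℝ)^α * |(l:ℝ)| ^ (2*x))) := by ring
      exact le_trans hL hR'
  -- per-row bound
  set K : ℝ := c2 * (4 * (14 / (3 * Real.sqrt M))) with hKdef
  have hKpos : (0:ℝ) < K := mul_pos hc2pos (by positivity)
  have row : ∀ l : ℤ, Summable (fun j : ℤ => wt l ^ (2*x) * (d (l + j) * d j)⁻¹) ∧
      (∑' j : ℤ, wt l ^ (2*x) * (d (l + j) * d j)⁻¹) ≤ K := by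
    intro l
    obtain ⟨hs1, he1⟩ := hshift l
    have hMl : (0:ℝ) < M + 2 * (l:ℝ)^(2*m) := by nlinarith [hpow0 l]
    have hbsum : Summable (fun j : ℤ => 2 * (M + 2 * (l:ℝ)^(2*m))⁻¹ * ((d j)⁻¹ + (d (l + j))⁻¹)) :=
      (hGsum.add hs1).mul_left _
    have hpairsum : Summable (fun j : ℤ => (d (l + j) * d j)⁻¹) :=
      Summable.of_nonneg_of_le (fun j => inv_nonneg.mpr (mul_pos (hdpos _) (hdpos _)).le) (hpair l) hbsum
    have hpairle : (∑' j : ℤ, (d (l + j) * d j)⁻¹) ≤ 2 * (M + 2 * (l:ℝ)^(2*m))⁻¹ * (G + G) := by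
      calc (∑' j : ℤ, (d (l + j) * d j)⁻¹)
          ≤ ∑' j : ℤ, 2 * (M + 2 * (l:ℝ)^(2*m))⁻¹ * ((d j)⁻¹ + (d (l + j))⁻¹) :=
            Summable.tsum_le_tsum (hpair l) hpairsum hbsum
        _ = 2 * (M + 2 * (l:ℝ)^(2*m))⁻¹ * (∑' j : ℤ, ((d j)⁻¹ + (d (l + j))⁻¹)) := tsum_mul_left
        _ = 2 * (M + 2 * (l:ℝ)^(2*m))⁻¹ * (G + G) := by
            rw [Summable.tsum_add hGsum hs1, he1, hGdef]
    have hwtnn : (0:ℝ) ≤ wt l ^ (2*x) := (Real.rpow_pos_of_pos (hwt_pos l) _).le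
    refine ⟨hpairsum.mul_left _, ?_⟩
    rw [tsum_mul_left]
    have hc2b : wt l ^ (2*x) * (M + 2 * (l:ℝ)^(2*m))⁻¹ ≤ c2 := by
      have hdiv : wt l ^ (2*x) / (M + 2 * (l:ℝ)^(2*m)) ≤ c2 := (div_le_iff₀ hMl).mpr (hwt l)
      rwa [div_eq_mul_inv] at hdiv
    calc wt l ^ (2*x) * (∑' j : ℤ, (d (l + j) * d j)⁻¹)
        ≤ wt l ^ (2*x) * (2 * (M + 2 * (l:ℝ)^(2*m))⁻¹ * (G + G)) :=
          mul_le_mul_of_nonneg_left hpairle hwtnn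
      _ = (wt l ^ (2*x) * (M + 2 * (l:ℝ)^(2*m))⁻¹) * (4 * G) := by ring
      _ ≤ c2 * (4 * G) := mul_le_mul_of_nonneg_right hc2b (by positivity)
      _ ≤ K := by
          rw [hKdef]
          apply mul_le_mul_of_nonneg_left _ hc2pos.le
          linarith
  -- potential coefficients
  set q : ℤ → ℝ := fun l => wt l ^ (2 * -((m:ℝ) * α)) * ‖v l‖ ^ 2 with hqdef
  have hqsum : Summable q := hv
  have hq0 : ∀ l, 0 ≤ q l := fun l =>
    mul_nonneg (Real.rpow_nonneg (hwt_pos l).le _) (sq_nonneg _)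
  have hqle : (∑' l : ℤ, q l) ≤ R ^ 2 := by
    have h0 : (0:ℝ) ≤ ∑' l : ℤ, q l := tsum_nonneg hq0
    have h1 : Real.sqrt (∑' l : ℤ, q l) ≤ R := hvR
    nlinarith [Real.sq_sqrt h0, Real.sqrt_nonneg (∑' l : ℤ, q l)]
  have hqwt : ∀ l : ℤ, q l * wt l ^ (2*x) = ‖v l‖ ^ 2 := by
    intro l
    rw [hqdef]
    have : wt l ^ (2 * -((m:ℝ) * α)) * wt l ^ (2*x) = 1 := by
      rw [← Real.rpow_add (hwt_pos l)]
      rw [show 2 * -((m:ℝ) * α) + 2*x = 0 by rw [hxdef]; ring, Real.rpow_zero]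
    calc wt l ^ (2 * -((m:ℝ) * α)) * ‖v l‖ ^ 2 * wt l ^ (2*x)
        = (wt l ^ (2 * -((m:ℝ) * α)) * wt l ^ (2*x)) * ‖v l‖ ^ 2 := by ring
      _ = ‖v l‖ ^ 2 := by rw [this]; ring
  -- identity for entries of the sheared matrix
  have hFid : ∀ l j : ℤ, ‖Smat m v lam (l + j) j‖ ^ 2
      = q l * (wt l ^ (2*x) * (d (l + j) * d j)⁻¹) := by
    intro l j
    have h1 := smat_sq m v lam (l+j) j (hdpos (l+j)) (hdpos j)
    have h2 : l + j - j = l := by ring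
    rw [h1, h2, ← hqwt l]
    ring
  have hg2sum : Summable (fun p : ℤ × ℤ => ‖Smat m v lam (p.1 + p.2) p.2‖ ^ 2) := by
    rw [summable_prod_of_nonneg (fun p => sq_nonneg _)]
    constructor
    · intro l
      simp only [hFid]
      exact ((row l).1.mul_left (q l))
    · apply Summable.of_nonneg_of_le (fun l => tsum_nonneg fun j => sq_nonneg _) ?_
        (hqsum.mul_right K)
      intro l
      calc (∑' j : ℤ, ‖Smat m v lam (l + j) j‖ ^ 2)
          = ∑' j : ℤ, q l * (wt l ^ (2*x) * (d (l + j) * d j)⁻¹) := by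
            apply tsum_congr; intro j; rw [hFid]
        _ = q l * ∑' j : ℤ, (wt l ^ (2*x) * (d (l + j) * d j)⁻¹) := tsum_mul_left
        _ ≤ q l * K := mul_le_mul_of_nonneg_left (row l).2 (hq0 l)
  have hcomp : (fun p : ℤ × ℤ => ‖Smat m v lam p.1 p.2‖ ^ 2) ∘ shearEquiv
      = fun p : ℤ × ℤ => ‖Smat m v lam (p.1 + p.2) p.2‖ ^ 2 := rfl
  have hFsum : Summable (fun p : ℤ × ℤ => ‖Smat m v lam p.1 p.2‖ ^ 2) :=
    shearEquiv.summable_iff.mp (hcomp ▸ hg2sum)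
  have hFtsum : (∑' p : ℤ × ℤ, ‖Smat m v lam p.1 p.2‖ ^ 2) ≤ R ^ 2 * K := by
    have e1 : (∑' p : ℤ × ℤ, ‖Smat m v lam p.1 p.2‖ ^ 2)
        = ∑' p : ℤ × ℤ, ‖Smat m v lam (p.1 + p.2) p.2‖ ^ 2 := by
      rw [← shearEquiv.tsum_eq (fun p : ℤ × ℤ => ‖Smat m v lam p.1 p.2‖ ^ 2), ← hcomp]
      rfl
    rw [e1, Summable.tsum_prod' hg2sum (fun l => by simpa only [hFid] using (row l).1.mul_left (q l))]
    have hrow_le : ∀ l : ℤ, (∑' j : ℤ, ‖Smat m v lam (l + j) j‖ ^ 2) ≤ q l * K := by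
      intro l
      calc (∑' j : ℤ, ‖Smat m v lam (l + j) j‖ ^ 2)
          = q l * ∑' j : ℤ, (wt l ^ (2*x) * (d (l + j) * d j)⁻¹) := by
            rw [← tsum_mul_left]
            apply tsum_congr; intro j; rw [hFid]
        _ ≤ q l * K := mul_le_mul_of_nonneg_left (row l).2 (hq0 l)
    calc (∑' l : ℤ, ∑' j : ℤ, ‖Smat m v lam (l + j) j‖ ^ 2)
        ≤ ∑' l : ℤ, q l * K := by
          apply Summable.tsum_le_tsum hrow_le _ (hqsum.mul_right K)
          · exact (summable_prod_of_nonneg (fun p => sq_nonneg _)).mp hg2sum |>.2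
      _ = (∑' l : ℤ, q l) * K := tsum_mul_right
      _ ≤ R ^ 2 * K := mul_le_mul_of_nonneg_right hqle hKpos.le
  -- rows of the (unsheared) matrix
  obtain ⟨hrowS, hcolS⟩ := (summable_prod_of_nonneg
    (f := fun p : ℤ × ℤ => ‖Smat m v lam p.1 p.2‖ ^ 2) (fun p => sq_nonneg _)).mp hFsum
  have hFtsum' : (∑' k : ℤ, ∑' j : ℤ, ‖Smat m v lam k j‖ ^ 2) ≤ R ^ 2 * K := by
    rw [← Summable.tsum_prod' hFsum hrowS]
    exact hFtsum
  -- final numeric bound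
  have hfinal : R ^ 2 * K < 1/4 := by
    set e : ℝ := (1 - α)/2 + 1/4 with hedef
    have he0 : (0:ℝ) ≤ e := by rw [hedef]; nlinarith
    have hMe : M₀ ^ e ≤ M ^ e := Real.rpow_le_rpow (by linarith) hM he0
    have h1 : (2:ℝ) ^ (2*m+2) * R < M ^ e := lt_of_lt_of_le hM₀R hMe
    have hP : (0:ℝ) < 2 ^ (2*m+2) * R := by positivity
    have h2 : ((2:ℝ) ^ (2*m+2) * R)^2 < (M ^ e)^2 := by nlinarith
    have h3 : (M ^ e)^2 = M ^ ((3:ℝ)/2 - α) := by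
      rw [sq, ← Real.rpow_add hMpos]
      congr 1
      rw [hedef]; ring
    have h4 : ((2:ℝ) ^ (2*m+2) * R)^2 = 2^(4*m+4) * R^2 := by
      rw [mul_pow, ← pow_mul]
      ring_nf
    have h5 : R^2 < M ^ ((3:ℝ)/2 - α) / 2^(4*m+4) := by
      rw [lt_div_iff₀ (by positivity)]
      calc R^2 * 2^(4*m+4) = 2^(4*m+4) * R^2 := by ring
        _ = ((2:ℝ)^(2*m+2) * R)^2 := h4.symm
        _ < (M ^ e)^2 := h2
        _ = M ^ ((3:ℝ)/2 - α) := h3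
    have h6 : R^2 * K < (M ^ ((3:ℝ)/2 - α) / 2^(4*m+4)) * K :=
      mul_lt_mul_of_pos_right h5 hKpos
    refine lt_of_lt_of_le h6 ?_
    rw [hKdef, hc2def]
    have hMpart : M ^ ((3:ℝ)/2 - α) * M ^ (α - 1) * (Real.sqrt M)⁻¹ = 1 := by
      rw [Real.sqrt_eq_rpow, ← Real.rpow_neg hMpos.le, ← Real.rpow_add hMpos,
        ← Real.rpow_add hMpos]
      norm_num
    have heq : M ^ ((3:ℝ)/2 - α) / 2^(4*m+4) *
        ((2:ℝ) ^ (2*x - α) * M ^ (α - 1) * (4 * (14 / (3 * Real.sqrt M))))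
        = ((2:ℝ) ^ (2*x - α) * ((2:ℝ)^(4*m+4))⁻¹) *
          (M ^ ((3:ℝ)/2 - α) * M ^ (α - 1) * (Real.sqrt M)⁻¹) * (56/3) := by
      field_simp
      ring
    rw [heq, hMpart, mul_one]
    have ha : (2:ℝ) ^ (2*x - α) ≤ 2 ^ (2*(m:ℝ) - 1) := by
      apply Real.rpow_le_rpow_left_iff (by norm_num : (1:ℝ) < 2) |>.mpr
      rw [hxdef]
      nlinarith
    have hb : (2:ℝ) ^ (2*(m:ℝ) - 1) * ((2:ℝ)^(4*m+4))⁻¹ = (2:ℝ) ^ (-(2*(m:ℝ)) - 5) := by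
      rw [show ((2:ℝ)^(4*m+4) : ℝ) = (2:ℝ) ^ (((4*m+4 : ℕ)):ℝ) from (Real.rpow_natCast 2 (4*m+4)).symm,
        ← Real.rpow_neg (by norm_num : (0:ℝ) ≤ 2), ← Real.rpow_add two_pos]
      congr 1
      push_cast
      ring
    have hc : (2:ℝ) ^ (-(2*(m:ℝ)) - 5) ≤ (2:ℝ) ^ (-7:ℝ) := by
      apply Real.rpow_le_rpow_left_iff (by norm_num : (1:ℝ) < 2) |>.mpr
      linarith
    have hd7 : (2:ℝ) ^ (-7:ℝ) = 1/128 := by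
      rw [show (-7:ℝ) = -((7:ℕ):ℝ) by norm_num, Real.rpow_neg (by norm_num : (0:ℝ) ≤ 2),
        Real.rpow_natCast]
      norm_num
    have hbig : (2:ℝ) ^ (2*x - α) * ((2:ℝ)^(4*m+4))⁻¹ ≤ 1/128 := by
      calc (2:ℝ) ^ (2*x - α) * ((2:ℝ)^(4*m+4))⁻¹
          ≤ (2:ℝ) ^ (2*(m:ℝ) - 1) * ((2:ℝ)^(4*m+4))⁻¹ :=
            mul_le_mul_of_nonneg_right ha (by positivity)
        _ = (2:ℝ) ^ (-(2*(m:ℝ)) - 5) := hb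
        _ ≤ (2:ℝ) ^ (-7:ℝ) := hc
        _ = 1/128 := hd7
    calc (2:ℝ) ^ (2*x - α) * ((2:ℝ)^(4*m+4))⁻¹ * (56/3)
        ≤ (1/128) * (56/3) := mul_le_mul_of_nonneg_right hbig (by norm_num)
      _ ≤ 1/4 := by norm_num
  -- rows as ℓ² vectors
  have hrowmem : ∀ k : ℤ, Memℓp (fun j : ℤ => (starRingEnd ℂ) (Smat m v lam k j)) 2 := by
    intro k
    rw [memℓp_two_iff]
    simpa only [RCLike.norm_conj] using hrowS k
  set Rk : ℤ → lp (fun _ : ℤ => ℂ) 2 :=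
    fun k => ⟨fun j => (starRingEnd ℂ) (Smat m v lam k j), hrowmem k⟩ with hRkdef
  have hRk_apply : ∀ k j : ℤ, (Rk k) j = (starRingEnd ℂ) (Smat m v lam k j) := fun k j => rfl
  have hRk_norm : ∀ k : ℤ, ‖Rk k‖ ^ 2 = ∑' j : ℤ, ‖Smat m v lam k j‖ ^ 2 := by
    intro k
    rw [lp_norm_sq]
    apply tsum_congr
    intro j
    rw [hRk_apply, RCLike.norm_conj]
  have hTmem : ∀ a : lp (fun _ : ℤ => ℂ) 2, Memℓp (fun k : ℤ => (inner ℂ (Rk k) a : ℂ)) 2 := by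
    intro a
    rw [memℓp_two_iff]
    apply Summable.of_nonneg_of_le (fun k => sq_nonneg _) ?_ (hcolS.mul_right (‖a‖^2))
    intro k
    have h1 : ‖(inner ℂ (Rk k) a : ℂ)‖ ≤ ‖Rk k‖ * ‖a‖ := norm_inner_le_norm _ _
    calc ‖(inner ℂ (Rk k) a : ℂ)‖^2 ≤ (‖Rk k‖ * ‖a‖)^2 :=
          pow_le_pow_left₀ (norm_nonneg _) h1 2
      _ = (∑' j : ℤ, ‖Smat m v lam k j‖ ^ 2) * ‖a‖^2 := by rw [mul_pow, hRk_norm]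
  set Tfun : lp (fun _ : ℤ => ℂ) 2 → lp (fun _ : ℤ => ℂ) 2 :=
    fun a => ⟨fun k => (inner ℂ (Rk k) a : ℂ), hTmem a⟩ with hTfundef
  have hTapp : ∀ a, ∀ k : ℤ, (Tfun a) k = (inner ℂ (Rk k) a : ℂ) := fun a k => rfl
  set Tlin : lp (fun _ : ℤ => ℂ) 2 →ₗ[ℂ] lp (fun _ : ℤ => ℂ) 2 :=
    { toFun := Tfun
      map_add' := by
        intro a b
        apply lp.ext
        funext k
        have : ((Tfun (a+b)) : ∀ _ : ℤ, ℂ) k = (Tfun (a+b)) k := rfl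
        calc ((Tfun (a+b)) : ∀ _ : ℤ, ℂ) k = (inner ℂ (Rk k) (a+b) : ℂ) := rfl
          _ = (inner ℂ (Rk k) a : ℂ) + (inner ℂ (Rk k) b : ℂ) := inner_add_right _ _ _
          _ = ((Tfun a + Tfun b : lp (fun _ : ℤ => ℂ) 2) : ∀ _ : ℤ, ℂ) k := by
              rw [lp.coeFn_add]; rfl
      map_smul' := by
        intro c a
        apply lp.ext
        funext k
        calc ((Tfun (c • a)) : ∀ _ : ℤ, ℂ) k = (inner ℂ (Rk k) (c • a) : ℂ) := rfl
          _ = c * (inner ℂ (Rk k) a : ℂ) := inner_smul_right _ _ _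
          _ = ((c • Tfun a : lp (fun _ : ℤ => ℂ) 2) : ∀ _ : ℤ, ℂ) k := by
              rw [lp.coeFn_smul]; rfl } with hTlindef
  set C0 : ℝ := Real.sqrt (R^2 * K) with hC0def
  have hC0nn : (0:ℝ) ≤ C0 := Real.sqrt_nonneg _
  have hRK0 : (0:ℝ) ≤ R^2 * K := mul_nonneg (sq_nonneg _) hKpos.le
  have hTbound : ∀ a, ‖Tlin a‖ ≤ C0 * ‖a‖ := by
    intro a
    have hTa : Tlin a = Tfun a := rfl
    have hsummT : Summable (fun k : ℤ => ‖(Tfun a) k‖^2) := (memℓp_two_iff _).mp (hTmem a)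
    have hsq : ‖Tfun a‖^2 ≤ (C0 * ‖a‖)^2 := by
      rw [lp_norm_sq]
      have h1 : ∀ k : ℤ, ‖(Tfun a) k‖^2 ≤ (∑' j : ℤ, ‖Smat m v lam k j‖ ^ 2) * ‖a‖^2 := by
        intro k
        have h2 : ‖(inner ℂ (Rk k) a : ℂ)‖ ≤ ‖Rk k‖ * ‖a‖ := norm_inner_le_norm _ _
        calc ‖(Tfun a) k‖^2 = ‖(inner ℂ (Rk k) a : ℂ)‖^2 := by rw [hTapp]
          _ ≤ (‖Rk k‖ * ‖a‖)^2 := pow_le_pow_left₀ (norm_nonneg _) h2 2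
          _ = (∑' j : ℤ, ‖Smat m v lam k j‖ ^ 2) * ‖a‖^2 := by rw [mul_pow, hRk_norm]
      calc (∑' k : ℤ, ‖(Tfun a) k‖^2)
          ≤ ∑' k : ℤ, (∑' j : ℤ, ‖Smat m v lam k j‖ ^ 2) * ‖a‖^2 :=
            Summable.tsum_le_tsum h1 hsummT (hcolS.mul_right _)
        _ = (∑' k : ℤ, ∑' j : ℤ, ‖Smat m v lam k j‖ ^ 2) * ‖a‖^2 := tsum_mul_right
        _ ≤ (R^2 * K) * ‖a‖^2 := mul_le_mul_of_nonneg_right hFtsum' (sq_nonneg _)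
        _ = (C0 * ‖a‖)^2 := by rw [mul_pow, hC0def, Real.sq_sqrt hRK0]
    have := Real.sqrt_le_sqrt hsq
    rw [Real.sqrt_sq (norm_nonneg _), Real.sqrt_sq (by positivity)] at this
    rw [hTa]
    exact this
  refine ⟨LinearMap.mkContinuous Tlin C0 hTbound, ?_, ?_⟩
  · have h1 : ‖LinearMap.mkContinuous Tlin C0 hTbound‖ ≤ C0 :=
      LinearMap.mkContinuous_norm_le Tlin hC0nn hTbound
    have h2 : C0 < 1/2 := by
      rw [hC0def, show (1:ℝ)/2 = Real.sqrt (1/4) by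
        rw [show (1:ℝ)/4 = (1/2)^2 by norm_num, Real.sqrt_sq (by norm_num)]]
      exact Real.sqrt_lt_sqrt hRK0 hfinal
    exact lt_of_le_of_lt h1 h2
  · intro a k
    have h1 : (LinearMap.mkContinuous Tlin C0 hTbound) a = Tfun a := rfl
    rw [h1, hTapp, lp.inner_eq_tsum]
    apply tsum_congr
    intro j
    rw [hRk_apply, RCLike.inner_apply]
    simp [mul_comm]
end
end

section
/- Let m ∈ ℕ, n ∈ ℕ with n ≥ (8m−4)m/(8m−7), and 0 < r < n^m π^{2m}. Then for every λ ∈ Vert^m_n(r), one has sup_{k ∈ ℤ} |λ − k^{2m}π^{2m}|^{−1/2} ≤ r^{−1/2} + (√3/π^m)·n^{−m+1/2}. -/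
open scoped BigOperators
noncomputable section

theorem gapGE2 (m n j : ℕ) (hm : 2 ≤ m) (hn : 2 ≤ n) (hj : j ≠ n) :
    ((n:ℝ))^m + (n:ℝ)^(2*m-1)/3 ≤ |((n:ℝ))^(2*m) - (j:ℝ)^(2*m)| := by
  have hN2 : (2:ℝ) ≤ (n:ℝ) := by exact_mod_cast hn
  have hJ0 : (0:ℝ) ≤ (j:ℝ) := by positivity
  obtain ⟨p, hp⟩ : ∃ p, 2*m - 1 = p := ⟨2*m-1, rfl⟩
  have hsp : 2*m = p + 1 := by omega
  have hsp2 : p = m + (m-1) := by omega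
  rw [hp, hsp]
  set N := (n:ℝ)
  set J := (j:ℝ)
  have hKey : (2:ℝ) ≤ N^(m-1) := by
    calc (2:ℝ) ≤ 2^(m-1) := le_self_pow₀ (by norm_num) (by omega)
      _ ≤ N^(m-1) := pow_le_pow_left₀ (by norm_num) hN2 _
  have hNm : (1:ℝ) ≤ N^m := one_le_pow₀ (by linarith)
  have h4 : N^p = N^m * N^(m-1) := by rw [hsp2, pow_add]
  have hNp0 : (0:ℝ) ≤ N^p := by positivity
  rcases lt_or_gt_of_ne hj with h | h
  · have hJle : J ≤ N - 1 := by
      have : (j:ℝ) + 1 ≤ n := by exact_mod_cast h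
      linarith
    have h1 : J^(p+1) ≤ (N-1)^(p+1) := pow_le_pow_left₀ hJ0 hJle _
    have h2 : (N-1)^(p+1) ≤ (N-1) * N^p := by
      rw [pow_succ]
      have h5 := pow_le_pow_left₀ (by linarith : (0:ℝ) ≤ N-1) (by linarith : N-1 ≤ N) p
      nlinarith [pow_nonneg (by linarith : (0:ℝ) ≤ N-1) p]
    have h3 : N^(p+1) = N * N^p := by rw [pow_succ]; ring
    rw [abs_of_nonneg (by nlinarith)]
    nlinarith [pow_nonneg (by linarith : (0:ℝ) ≤ N) m]
  · have hJge : N + 1 ≤ J := by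
      have : (n:ℝ) + 1 ≤ j := by exact_mod_cast h
      linarith
    have h1 : (N+1)^(p+1) ≤ J^(p+1) := pow_le_pow_left₀ (by linarith) hJge _
    have h2 : (N+1) * N^p ≤ (N+1)^(p+1) := by
      rw [pow_succ]
      have h5 := pow_le_pow_left₀ (by linarith : (0:ℝ) ≤ N) (by linarith : N ≤ N+1) p
      nlinarith
    have h3 : N^(p+1) = N * N^p := by rw [pow_succ]; ring
    rw [abs_of_nonpos (by nlinarith)]
    nlinarith [pow_nonneg (by linarith : (0:ℝ) ≤ N) m]

theorem gapGE1 (n j : ℕ) (hn : 4 ≤ n) (hj : j ≠ n) :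
    ((n:ℝ))^1 + (n:ℝ)^(2*1-1)/3 ≤ |((n:ℝ))^(2*1) - (j:ℝ)^(2*1)| := by
  have hN2 : (4:ℝ) ≤ (n:ℝ) := by exact_mod_cast hn
  have hJ0 : (0:ℝ) ≤ (j:ℝ) := by positivity
  norm_num
  rcases lt_or_gt_of_ne hj with h | h
  · have hJle : (j:ℝ) ≤ (n:ℝ) - 1 := by
      have : (j:ℝ) + 1 ≤ n := by exact_mod_cast h
      linarith
    rw [abs_of_nonneg (by nlinarith)]
    nlinarith
  · have hJge : (n:ℝ) + 1 ≤ (j:ℝ) := by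
      have : (n:ℝ) + 1 ≤ j := by exact_mod_cast h
      linarith
    rw [abs_of_nonpos (by nlinarith)]
    nlinarith


theorem gapGE (m n j : ℕ) (hm : 1 ≤ m)
    (hn : ((8 * (m : ℝ) - 4) * m) / (8 * m - 7) ≤ n) (hj : j ≠ n) :
    ((n:ℝ))^m + (n:ℝ)^(2*m-1)/3 ≤ |((n:ℝ))^(2*m) - (j:ℝ)^(2*m)| := by
  rcases eq_or_lt_of_le hm with h1 | h2
  · obtain rfl : m = 1 := h1.symm
    have hn4 : 4 ≤ n := by
      norm_num at hn
      exact hn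
    exact gapGE1 n j hn4 hj
  · have hm2 : 2 ≤ m := h2
    have hn2 : 2 ≤ n := by
      have hm2' : (2:ℝ) ≤ (m:ℝ) := by exact_mod_cast hm2
      have hd : (0:ℝ) < 8 * (m:ℝ) - 7 := by linarith
      have : (2:ℝ) ≤ ((8 * (m:ℝ) - 4) * m) / (8 * m - 7) := by
        rw [le_div_iff₀ hd]
        nlinarith
      have : (2:ℝ) ≤ (n:ℝ) := le_trans this hn
      exact_mod_cast this
    exact gapGE2 m n j hm2 hn2 hj

theorem statement18 (m : ℕ) (hm : 0 < m)
    (n : ℕ) (hn : ((8 * (m : ℝ) - 4) * m) / (8 * m - 7) ≤ n)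
    (r : ℝ) (hr0 : 0 < r) (hr1 : r < (n : ℝ) ^ m * Real.pi ^ (2 * m)) :
    ∀ lam ∈ VertSet m n r, ∀ k : ℤ,
      1 / Real.sqrt (diagAbs m lam k)
        ≤ 1 / Real.sqrt r + (Real.sqrt 3 / Real.pi ^ m) * (n : ℝ) ^ (-(m : ℝ) + 1 / 2) := by
  intro lam hlam k
  obtain ⟨hre, habs⟩ := hlam
  have hπ := Real.pi_pos
  have hn1 : 1 ≤ n := by
    by_contra h
    have hz : n = 0 := by omega
    rw [hz] at hr1
    rw [Nat.cast_zero, zero_pow (by omega : m ≠ 0), zero_mul] at hr1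
    linarith
  have hN0 : (0:ℝ) < (n:ℝ) := by exact_mod_cast hn1
  have hterm2 : 0 ≤ (Real.sqrt 3 / Real.pi ^ m) * (n : ℝ) ^ (-(m : ℝ) + 1/2) := by positivity
  by_cases hk : k.natAbs = n
  · have hkc : (k:ℂ)^(2*m) = ((n:ℕ):ℂ)^(2*m) := by
      rcases Int.natAbs_eq k with h | h
      · rw [h, hk]; push_cast; ring
      · rw [h, hk]; push_cast; rw [Even.neg_pow (even_two_mul m)]
    have hdr : r ≤ diagAbs m lam k := by rw [diagAbs, hkc]; exact habs
    have h1 : 1 / Real.sqrt (diagAbs m lam k) ≤ 1 / Real.sqrt r :=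
      one_div_le_one_div_of_le (Real.sqrt_pos.mpr hr0) (Real.sqrt_le_sqrt hdr)
    linarith
  · have hJabs : ((k.natAbs : ℕ):ℝ) = |(k:ℝ)| := by
      push_cast [Nat.cast_natAbs]
      norm_cast
    have hJpow : ((k:ℝ))^(2*m) = ((k.natAbs : ℕ):ℝ)^(2*m) := by
      rw [hJabs, Even.pow_abs (even_two_mul m)]
    have hreck : (lam - (k:ℂ)^(2*m)*(Real.pi:ℂ)^(2*m)).re
        = lam.re - ((k.natAbs : ℕ):ℝ)^(2*m)*Real.pi^(2*m) := by
      have h0 : ((k:ℂ))^(2*m) = ((((k.natAbs : ℕ):ℝ)^(2*m):ℝ):ℂ) := by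
        rw [← hJpow]; push_cast; ring
      rw [show ((k:ℂ))^(2*m)*(Real.pi:ℂ)^(2*m)
          = (((((k.natAbs : ℕ):ℝ)^(2*m)*Real.pi^(2*m) : ℝ)):ℂ) by rw [h0]; push_cast; ring,
        Complex.sub_re, Complex.ofReal_re]
    have hrecn : (lam - ((n:ℕ):ℂ)^(2*m)*(Real.pi:ℂ)^(2*m)).re
        = lam.re - ((n:ℕ):ℝ)^(2*m)*Real.pi^(2*m) := by
      rw [show (((n:ℕ)):ℂ)^(2*m)*(Real.pi:ℂ)^(2*m)
          = (((((n:ℕ)):ℝ)^(2*m)*Real.pi^(2*m) : ℝ) : ℂ) by push_cast; ring,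
        Complex.sub_re, Complex.ofReal_re]
    have hre' : |lam.re - ((n:ℕ):ℝ)^(2*m)*Real.pi^(2*m)| ≤ (n:ℝ)^m * Real.pi^(2*m) := by
      rw [← hrecn]; exact hre
    have hgap := gapGE m n k.natAbs hm hn hk
    have hlow : Real.pi^(2*m) * ((n:ℝ)^(2*m-1)/3) ≤ diagAbs m lam k := by
      have h3 : |lam.re - ((k.natAbs:ℕ):ℝ)^(2*m)*Real.pi^(2*m)| ≤ diagAbs m lam k := by
        rw [← hreck]; exact Complex.abs_re_le_norm _
      have h5 : |((n:ℝ)^(2*m) - ((k.natAbs:ℕ):ℝ)^(2*m)) * Real.pi^(2*m)|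
          ≤ |lam.re - ((k.natAbs:ℕ):ℝ)^(2*m)*Real.pi^(2*m)|
            + |lam.re - ((n:ℕ):ℝ)^(2*m)*Real.pi^(2*m)| := by
        rw [show ((n:ℝ)^(2*m) - ((k.natAbs:ℕ):ℝ)^(2*m)) * Real.pi^(2*m)
            = (lam.re - ((k.natAbs:ℕ):ℝ)^(2*m)*Real.pi^(2*m))
              - (lam.re - ((n:ℕ):ℝ)^(2*m)*Real.pi^(2*m)) by push_cast; ring]
        exact abs_sub _ _
      rw [abs_mul, abs_of_pos (by positivity : (0:ℝ) < Real.pi^(2*m))] at h5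
      have h6 : ((n:ℝ)^m + (n:ℝ)^(2*m-1)/3) * Real.pi^(2*m)
          ≤ |(n:ℝ)^(2*m) - ((k.natAbs:ℕ):ℝ)^(2*m)| * Real.pi^(2*m) :=
        mul_le_mul_of_nonneg_right hgap (by positivity)
      nlinarith
    have hD0 : (0:ℝ) < Real.pi^(2*m) * ((n:ℝ)^(2*m-1)/3) := by positivity
    set A := Real.pi^m * Real.sqrt ((n:ℝ)^(2*m-1)) / Real.sqrt 3 with hAdef
    have hA0 : 0 < A :=
      div_pos (mul_pos (by positivity) (Real.sqrt_pos.mpr (by positivity)))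
        (Real.sqrt_pos.mpr (by norm_num))
    have hA2 : A^2 = Real.pi^(2*m) * ((n:ℝ)^(2*m-1)/3) := by
      rw [hAdef, div_pow, mul_pow, Real.sq_sqrt (by positivity : (0:ℝ) ≤ (n:ℝ)^(2*m-1)),
        Real.sq_sqrt (by norm_num : (0:ℝ) ≤ 3), ← pow_mul]
      ring_nf
    have hAle : A ≤ Real.sqrt (diagAbs m lam k) := by
      have := Real.sqrt_le_sqrt (hA2 ▸ hlow)
      rwa [Real.sqrt_sq hA0.le] at this
    have h7 : 1 / Real.sqrt (diagAbs m lam k) ≤ 1 / A :=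
      one_div_le_one_div_of_le hA0 hAle
    have h8 : 1 / A = (Real.sqrt 3 / Real.pi ^ m) * (n:ℝ) ^ (-(m : ℝ) + 1/2) := by
      have hrp : ((n:ℝ)) ^ (-(m:ℝ) + 1/2) = (Real.sqrt ((n:ℝ)^(2*m-1)))⁻¹ := by
        have h1 : Real.sqrt ((n:ℝ)^(2*m-1)) = (n:ℝ) ^ (((2*m-1:ℕ):ℝ)/2) := by
          rw [Real.sqrt_eq_rpow, ← Real.rpow_natCast (n:ℝ) (2*m-1), ← Real.rpow_mul hN0.le]
          ring_nf
        rw [h1, ← Real.rpow_neg hN0.le]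
        congr 1
        have h2 : ((2*m-1:ℕ):ℝ) = 2*(m:ℝ)-1 := by
          have h3 : (1:ℕ) ≤ 2*m := by omega
          push_cast [h3]; ring
        rw [h2]; ring
      rw [hrp, hAdef]
      field_simp
    rw [h8] at h7
    have hsr : 0 ≤ 1 / Real.sqrt r := by positivity
    linarith
end
end
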